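/- arXiv:0712.2913 — 4 statements merged into one kernel-verified Lean document; each statement's English description precedes it below -/
import Mathlib

section
/- (Failure of C⁰-rigidity for multiple brackets, two-dimensional case.) For any three functions F_1, F_2, F_3 ∈ C_c^∞(ℝ²) and any ε > 0, there exist F'_1, F'_2, F'_3 ∈ C_c^∞(ℝ²) with ‖F'_i − F_i‖ < ε for i = 1,2,3 such that the triple Poisson bracket vanishes identically: {F'_1, {F'_2, F'_3}} ≡ 0. -/
/-- The phase space `ℝ^{2n} = ℝ^n × ℝ^n` with coordinates `(p, q)`. -/
abbrev Phase (n : ℕ) := (Fin n → ℝ) × (Fin n → ℝ)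

/-- Partial derivative `∂F/∂p_i`. -/
noncomputable def pderivP {n : ℕ} (F : Phase n → ℝ) (i : Fin n) (x : Phase n) : ℝ :=
  fderiv ℝ F x (Pi.single i 1, 0)

/-- Partial derivative `∂F/∂q_i`. -/
noncomputable def pderivQ {n : ℕ} (F : Phase n → ℝ) (i : Fin n) (x : Phase n) : ℝ :=
  fderiv ℝ F x (0, Pi.single i 1)

/-- The standard Poisson bracket
`{F,G} = Σ i, (∂F/∂q_i · ∂G/∂p_i − ∂F/∂p_i · ∂G/∂q_i)`. -/
noncomputable def poisson {n : ℕ} (F G : Phase n → ℝ) (x : Phase n) : ℝ :=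
  ∑ i : Fin n, (pderivQ F i x * pderivP G i x - pderivP F i x * pderivQ G i x)

/-- `F ∈ C_c^∞(ℝ^{2n})`: smooth and compactly supported. -/
def SmoothCpt {n : ℕ} (F : Phase n → ℝ) : Prop :=
  ContDiff ℝ (⊤ : ℕ∞) F ∧ HasCompactSupport F

/-- The uniform (C⁰) norm `‖F‖ = sup_x |F x|`. -/
noncomputable def unif {n : ℕ} (F : Phase n → ℝ) : ℝ := ⨆ x, |F x|

/-! ### Auxiliary construction: smooth staircases -/

open Set Filter

/-- Smooth staircase: `stair u = ⌊u⌋ + transition (3 fract u - 1)`. -/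
noncomputable def stair (u : ℝ) : ℝ := ⌊u⌋ + Real.smoothTransition (3 * Int.fract u - 1)

lemma stair_rep {v : ℝ} {k : ℤ} (h1 : (k:ℝ) - 1/3 < v) (h2 : v < (k:ℝ) + 1) :
    stair v = k + Real.smoothTransition (3*(v - k) - 1) := by
  rcases le_or_gt (k:ℝ) v with h | h
  · have hf : ⌊v⌋ = k := by
      rw [Int.floor_eq_iff]; exact ⟨h, by exact_mod_cast h2⟩
    unfold stair
    rw [Int.fract, hf]
  · have hf : ⌊v⌋ = k - 1 := by
      rw [Int.floor_eq_iff]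
      constructor
      · push_cast; nlinarith
      · push_cast; linarith
    unfold stair
    rw [Int.fract, hf]
    push_cast
    rw [Real.smoothTransition.one_of_one_le (by nlinarith),
        Real.smoothTransition.zero_of_nonpos (by nlinarith)]
    ring

lemma stair_smooth : ContDiff ℝ (⊤ : ℕ∞) stair := by
  rw [contDiff_iff_contDiffAt]
  intro u
  have h1 : (⌊u⌋ : ℝ) - 1/3 < u := by linarith [Int.floor_le u]
  have h2 : u < (⌊u⌋ : ℝ) + 1 := Int.lt_floor_add_one u
  have hlin : ContDiff ℝ (⊤:ℕ∞) (fun v : ℝ => 3*(v - (⌊u⌋:ℝ)) - 1) :=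
    (contDiff_const.mul (contDiff_id.sub contDiff_const)).sub contDiff_const
  have hmodel : ContDiffAt ℝ (⊤ : ℕ∞)
      (fun v => (⌊u⌋ : ℝ) + Real.smoothTransition (3*(v - ⌊u⌋) - 1)) u :=
    contDiffAt_const.add (Real.smoothTransition.contDiff.comp hlin).contDiffAt
  apply hmodel.congr_of_eventuallyEq
  filter_upwards [isOpen_Ioo.mem_nhds (show u ∈ Ioo ((⌊u⌋:ℝ) - 1/3) ((⌊u⌋:ℝ)+1) from ⟨h1, h2⟩)]
    with v hv
  exact stair_rep hv.1 hv.2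

lemma stair_plateau {v : ℝ} {k : ℤ} (h1 : (k:ℝ) - 1/3 < v) (h2 : v < (k:ℝ) + 1/3) :
    stair v = k := by
  rw [stair_rep h1 (by linarith), Real.smoothTransition.zero_of_nonpos (by linarith), add_zero]

lemma stair_close (u : ℝ) : |stair u - u| ≤ 1 := by
  have h1 := Int.floor_le u
  have h2 := Int.lt_floor_add_one u
  have h3 := Real.smoothTransition.nonneg (3 * Int.fract u - 1)
  have h4 := Real.smoothTransition.le_one (3 * Int.fract u - 1)
  unfold stair
  rw [abs_le]
  constructor <;> linarith

/-- Scaled staircase. -/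
noncomputable def sig (d t : ℝ) : ℝ := d * stair (t / d)

/-- Scaled staircase shifted by half a period. -/
noncomputable def sig' (d t : ℝ) : ℝ := d * stair (t / d - 1/2) + d/2

lemma sig_smooth (d : ℝ) : ContDiff ℝ (⊤ : ℕ∞) (sig d) :=
  contDiff_const.mul (stair_smooth.comp (contDiff_id.div_const d))

lemma sig'_smooth (d : ℝ) : ContDiff ℝ (⊤ : ℕ∞) (sig' d) :=
  (contDiff_const.mul (stair_smooth.comp ((contDiff_id.div_const d).sub contDiff_const))).add
    contDiff_const

lemma sig_close {d : ℝ} (hd : 0 < d) (t : ℝ) : |sig d t - t| ≤ d := by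
  have h := stair_close (t / d)
  have : sig d t - t = d * (stair (t/d) - t/d) := by
    have e : d * (t/d) = t := by field_simp
    unfold sig; linear_combination e
  rw [this, abs_mul, abs_of_pos hd]
  calc d * |stair (t/d) - t/d| ≤ d * 1 := by nlinarith
    _ = d := mul_one d

lemma sig'_close {d : ℝ} (hd : 0 < d) (t : ℝ) : |sig' d t - t| ≤ d := by
  have h := stair_close (t / d - 1/2)
  have : sig' d t - t = d * (stair (t/d - 1/2) - (t/d - 1/2)) := by
    have e : d * (t/d) = t := by field_simp
    unfold sig'; linear_combination e
  rw [this, abs_mul, abs_of_pos hd]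
  calc d * |stair (t/d - 1/2) - (t/d - 1/2)| ≤ d * 1 := by nlinarith
    _ = d := mul_one d

/-- Plateau predicate: `f` is constant on an open interval around `t`. -/
def Plateau (f : ℝ → ℝ) (t : ℝ) : Prop :=
  ∃ c a b, a < t ∧ t < b ∧ ∀ v ∈ Set.Ioo a b, f v = c

lemma sig_plateau {d : ℝ} (hd : 0 < d) {t : ℝ} {k : ℤ} (h : |t/d - k| < 1/3) :
    Plateau (sig d) t := by
  rw [abs_lt] at h
  refine ⟨d * k, ((k:ℝ) - 1/3) * d, ((k:ℝ) + 1/3) * d, ?_, ?_, ?_⟩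
  · exact (lt_div_iff₀ hd).mp (by linarith [h.1])
  · exact (div_lt_iff₀ hd).mp (by linarith [h.2])
  · rintro v ⟨hv1, hv2⟩
    have h1 : (k:ℝ) - 1/3 < v / d := (lt_div_iff₀ hd).mpr hv1
    have h2 : v / d < (k:ℝ) + 1/3 := (div_lt_iff₀ hd).mpr hv2
    unfold sig
    rw [stair_plateau h1 h2]

lemma sig'_plateau {d : ℝ} (hd : 0 < d) {t : ℝ} {k : ℤ} (h : |t/d - 1/2 - k| < 1/3) :
    Plateau (sig' d) t := by
  rw [abs_lt] at h
  refine ⟨d * k + d/2, ((k:ℝ) + 1/2 - 1/3) * d, ((k:ℝ) + 1/2 + 1/3) * d, ?_, ?_, ?_⟩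
  · exact (lt_div_iff₀ hd).mp (by linarith [h.1])
  · exact (div_lt_iff₀ hd).mp (by linarith [h.2])
  · rintro v ⟨hv1, hv2⟩
    have h1 : (k:ℝ) - 1/3 < v / d - 1/2 := by
      have := (lt_div_iff₀ hd).mpr hv1
      linarith
    have h2 : v / d - 1/2 < (k:ℝ) + 1/3 := by
      have := (div_lt_iff₀ hd).mpr hv2
      linarith
    unfold sig'
    rw [stair_plateau h1 h2]

lemma cover {d : ℝ} (hd : 0 < d) (t : ℝ) : Plateau (sig d) t ∨ Plateau (sig' d) t := by
  set u := t / d with hu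
  set k := round u with hk
  have hr : |u - k| ≤ 1/2 := abs_sub_round u
  rcases lt_or_ge |u - k| (1/3) with h | h
  · exact Or.inl (sig_plateau hd h)
  · right
    rcases le_or_gt (k:ℝ) u with hs | hs
    · apply sig'_plateau hd (k := k)
      rw [abs_le] at hr
      rw [abs_of_nonneg (by linarith)] at h
      rw [abs_lt]
      constructor <;> linarith
    · apply sig'_plateau hd (k := k - 1)
      rw [abs_le] at hr
      rw [abs_of_nonpos (by linarith)] at h
      rw [abs_lt]
      push_cast
      constructor <;> linarith

/-! ### Derivative lemmas -/

lemma pdP_zero {G : Phase 1 → ℝ} {y : Phase 1} {H : (Fin 1 → ℝ) → ℝ}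
    (hH : Differentiable ℝ H) (hEq : G =ᶠ[nhds y] fun z => H z.2) (v : Fin 1 → ℝ) :
    fderiv ℝ G y (v, 0) = 0 := by
  have h2 : HasFDerivAt (fun z : Phase 1 => H z.2)
      ((fderiv ℝ H y.2).comp (ContinuousLinearMap.snd ℝ (Fin 1 → ℝ) (Fin 1 → ℝ))) y :=
    (hH y.2).hasFDerivAt.comp y hasFDerivAt_snd
  rw [hEq.fderiv_eq, h2.fderiv]
  simp

lemma pdQ_zero {G : Phase 1 → ℝ} {y : Phase 1} {H : (Fin 1 → ℝ) → ℝ}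
    (hH : Differentiable ℝ H) (hEq : G =ᶠ[nhds y] fun z => H z.1) (v : Fin 1 → ℝ) :
    fderiv ℝ G y (0, v) = 0 := by
  have h2 : HasFDerivAt (fun z : Phase 1 => H z.1)
      ((fderiv ℝ H y.1).comp (ContinuousLinearMap.fst ℝ (Fin 1 → ℝ) (Fin 1 → ℝ))) y :=
    (hH y.1).hasFDerivAt.comp y hasFDerivAt_fst
  rw [hEq.fderiv_eq, h2.fderiv]
  simp

lemma poisson_zero_of_left {F G : Phase 1 → ℝ} {x : Phase 1} (h : fderiv ℝ F x = 0) :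
    poisson F G x = 0 := by
  simp [poisson, pderivP, pderivQ, h]

lemma poisson_zero_of_right {F G : Phase 1 → ℝ} {x : Phase 1} (h : fderiv ℝ G x = 0) :
    poisson F G x = 0 := by
  simp [poisson, pderivP, pderivQ, h]

lemma pderivP_comp_zero {F : Phase 1 → ℝ} (hF : ContDiff ℝ (⊤:ℕ∞) F) {σ : ℝ → ℝ}
    (hσ : ContDiff ℝ (⊤:ℕ∞) σ) {y : Phase 1} {c a b : ℝ}
    (hy : y.1 0 ∈ Set.Ioo a b) (hc : ∀ v ∈ Set.Ioo a b, σ v = c) (i : Fin 1) :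
    pderivP (fun z => F (fun j => σ (z.1 j), fun j => σ (z.2 j))) i y = 0 := by
  have hU : IsOpen {z : Phase 1 | z.1 0 ∈ Set.Ioo a b} :=
    isOpen_Ioo.preimage ((continuous_apply 0).comp continuous_fst)
  have hEq : (fun z : Phase 1 => F (fun j => σ (z.1 j), fun j => σ (z.2 j))) =ᶠ[nhds y]
      fun z => F (fun _ => c, fun j => σ (z.2 j)) := by
    filter_upwards [hU.mem_nhds hy] with z hz
    have h : (fun j : Fin 1 => σ (z.1 j)) = fun _ => c := by
      funext j
      have hj : j = 0 := Subsingleton.elim j 0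
      rw [hj]; exact hc _ hz
    rw [h]
  have hH : Differentiable ℝ (fun w : Fin 1 → ℝ => F (fun _ => c, fun j => σ (w j))) :=
    (hF.comp (contDiff_const.prodMk (contDiff_pi.2 fun j =>
      hσ.comp (contDiff_apply ℝ ℝ j)))).differentiable (by simp)
  exact pdP_zero hH hEq _

lemma pderivQ_comp_zero {F : Phase 1 → ℝ} (hF : ContDiff ℝ (⊤:ℕ∞) F) {σ : ℝ → ℝ}
    (hσ : ContDiff ℝ (⊤:ℕ∞) σ) {y : Phase 1} {c a b : ℝ}
    (hy : y.2 0 ∈ Set.Ioo a b) (hc : ∀ v ∈ Set.Ioo a b, σ v = c) (i : Fin 1) :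
    pderivQ (fun z => F (fun j => σ (z.1 j), fun j => σ (z.2 j))) i y = 0 := by
  have hU : IsOpen {z : Phase 1 | z.2 0 ∈ Set.Ioo a b} :=
    isOpen_Ioo.preimage ((continuous_apply 0).comp continuous_snd)
  have hEq : (fun z : Phase 1 => F (fun j => σ (z.1 j), fun j => σ (z.2 j))) =ᶠ[nhds y]
      fun z => F (fun j => σ (z.1 j), fun _ => c) := by
    filter_upwards [hU.mem_nhds hy] with z hz
    have h : (fun j : Fin 1 => σ (z.2 j)) = fun _ => c := by
      funext j
      have hj : j = 0 := Subsingleton.elim j 0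
      rw [hj]; exact hc _ hz
    rw [h]
  have hH : Differentiable ℝ (fun w : Fin 1 → ℝ => F (fun j => σ (w j), fun _ => c)) :=
    (hF.comp ((contDiff_pi.2 fun j =>
      hσ.comp (contDiff_apply ℝ ℝ j)).prodMk contDiff_const)).differentiable (by simp)
  exact pdQ_zero hH hEq _

/-! ### Composition with a staircase map -/

lemma dist_map_le {f : ℝ → ℝ} {c : ℝ} (hc : 0 ≤ c) (hclose : ∀ t, |f t - t| ≤ c)
    (z : Phase 1) :
    dist z ((fun i => f (z.1 i), fun i => f (z.2 i)) : Phase 1) ≤ c := by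
  rw [Prod.dist_eq]
  apply max_le
  · rw [dist_pi_le_iff hc]
    intro i
    rw [Real.dist_eq, abs_sub_comm]
    exact hclose _
  · rw [dist_pi_le_iff hc]
    intro i
    rw [Real.dist_eq, abs_sub_comm]
    exact hclose _

lemma smoothCpt_comp {F : Phase 1 → ℝ} (hF : SmoothCpt F) {f : ℝ → ℝ}
    (hf : ContDiff ℝ (⊤:ℕ∞) f) {c : ℝ} (hc : 0 ≤ c) (hclose : ∀ t, |f t - t| ≤ c) :
    SmoothCpt (fun z : Phase 1 => F (fun i => f (z.1 i), fun i => f (z.2 i))) := by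
  have hΨ : ContDiff ℝ (⊤:ℕ∞)
      (fun z : Phase 1 => ((fun i => f (z.1 i), fun i => f (z.2 i)) : Phase 1)) := by
    apply ContDiff.prodMk
    · exact contDiff_pi.2 fun i => hf.comp ((contDiff_apply ℝ ℝ i).comp contDiff_fst)
    · exact contDiff_pi.2 fun i => hf.comp ((contDiff_apply ℝ ℝ i).comp contDiff_snd)
  refine ⟨hF.1.comp hΨ, ?_⟩
  obtain ⟨R, hR⟩ := hF.2.isBounded.subset_closedBall 0
  have hsub : tsupport (fun z : Phase 1 => F (fun i => f (z.1 i), fun i => f (z.2 i))) ⊆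
      Metric.closedBall 0 (R + c) := by
    have h1 : tsupport (fun z : Phase 1 => F (fun i => f (z.1 i), fun i => f (z.2 i))) ⊆
        (fun z : Phase 1 => ((fun i => f (z.1 i), fun i => f (z.2 i)) : Phase 1)) ⁻¹'
          (tsupport F) := by
      apply closure_minimal
      · exact fun z hz => subset_closure (Function.mem_support.mpr hz)
      · exact (isClosed_tsupport F).preimage hΨ.continuous
    intro z hz
    have h2 : ((fun i => f (z.1 i), fun i => f (z.2 i)) : Phase 1) ∈
        Metric.closedBall 0 R := hR (h1 hz)
    rw [Metric.mem_closedBall] at h2 ⊢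
    calc dist z 0 ≤ dist z ((fun i => f (z.1 i), fun i => f (z.2 i)) : Phase 1) +
          dist ((fun i => f (z.1 i), fun i => f (z.2 i)) : Phase 1) 0 := dist_triangle _ _ _
      _ ≤ c + R := add_le_add (dist_map_le hc hclose z) h2
      _ = R + c := add_comm _ _
  exact IsCompact.of_isClosed_subset (isCompact_closedBall 0 (R + c))
    (isClosed_tsupport _) hsub

/-! ### Main theorem -/

/-- **Failure of C⁰-rigidity for multiple brackets in dimension two.** Any three functions
in `C_c^∞(ℝ²)` admit arbitrarily uniformly-close smooth compactly supported perturbations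
whose triple Poisson bracket vanishes identically. Here `ℝ² = Phase 1`. -/
theorem triple_bracket_flexible_dim_two (F₁ F₂ F₃ : Phase 1 → ℝ)
    (h₁ : SmoothCpt F₁) (h₂ : SmoothCpt F₂) (h₃ : SmoothCpt F₃)
    (ε : ℝ) (hε : 0 < ε) :
    ∃ F₁' F₂' F₃' : Phase 1 → ℝ,
      SmoothCpt F₁' ∧ SmoothCpt F₂' ∧ SmoothCpt F₃' ∧
      unif (fun x => F₁' x - F₁ x) < ε ∧
      unif (fun x => F₂' x - F₂ x) < ε ∧
      unif (fun x => F₃' x - F₃ x) < ε ∧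
      ∀ x, poisson F₁' (poisson F₂' F₃') x = 0 := by
  -- uniform continuity moduli
  have huc : ∀ F : Phase 1 → ℝ, SmoothCpt F →
      ∃ δ > 0, ∀ {a b : Phase 1}, dist a b < δ → dist (F a) (F b) < ε/2 := by
    intro F hF
    have := Metric.uniformContinuous_iff.mp
      (hF.2.uniformContinuous_of_continuous hF.1.continuous) (ε/2) (half_pos hε)
    obtain ⟨δ, hδ, h⟩ := this
    exact ⟨δ, hδ, fun hab => h hab⟩
  obtain ⟨δ₁, hδ₁, hF₁uc⟩ := huc F₁ h₁
  obtain ⟨δ₂, hδ₂, hF₂uc⟩ := huc F₂ h₂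
  obtain ⟨δ₃, hδ₃, hF₃uc⟩ := huc F₃ h₃
  set d : ℝ := min (min δ₁ δ₂) δ₃ / 2 with hd_def
  have hd : 0 < d := by positivity
  have hd₁ : d < δ₁ := by
    have : min (min δ₁ δ₂) δ₃ ≤ δ₁ := le_trans (min_le_left _ _) (min_le_left _ _)
    rw [hd_def]; linarith
  have hd₂ : d < δ₂ := by
    have : min (min δ₁ δ₂) δ₃ ≤ δ₂ := le_trans (min_le_left _ _) (min_le_right _ _)
    rw [hd_def]; linarith
  have hd₃ : d < δ₃ := by
    have : min (min δ₁ δ₂) δ₃ ≤ δ₃ := min_le_right _ _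
    rw [hd_def]; linarith
  -- the perturbations
  refine ⟨fun z => F₁ (fun i => sig' d (z.1 i), fun i => sig' d (z.2 i)),
         fun z => F₂ (fun i => sig d (z.1 i), fun i => sig d (z.2 i)),
         fun z => F₃ (fun i => sig d (z.1 i), fun i => sig d (z.2 i)),
         smoothCpt_comp h₁ (sig'_smooth d) hd.le (sig'_close hd),
         smoothCpt_comp h₂ (sig_smooth d) hd.le (sig_close hd),
         smoothCpt_comp h₃ (sig_smooth d) hd.le (sig_close hd),
         ?_, ?_, ?_, ?_⟩
  · -- closeness for F₁
    apply lt_of_le_of_lt _ (half_lt_self hε)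
    apply Real.iSup_le _ (half_pos hε).le
    intro x
    have := hF₁uc (lt_of_le_of_lt (dist_map_le hd.le (sig'_close hd) x) hd₁)
    rw [dist_comm, Real.dist_eq] at this
    exact this.le
  · apply lt_of_le_of_lt _ (half_lt_self hε)
    apply Real.iSup_le _ (half_pos hε).le
    intro x
    have := hF₂uc (lt_of_le_of_lt (dist_map_le hd.le (sig_close hd) x) hd₂)
    rw [dist_comm, Real.dist_eq] at this
    exact this.le
  · apply lt_of_le_of_lt _ (half_lt_self hε)
    apply Real.iSup_le _ (half_pos hε).le
    intro x
    have := hF₃uc (lt_of_le_of_lt (dist_map_le hd.le (sig_close hd) x) hd₃)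
    rw [dist_comm, Real.dist_eq] at this
    exact this.le
  · -- vanishing of the triple bracket
    intro x
    rcases cover hd (x.1 0) with ⟨c, a, b, ha, hb, hc⟩ | hp
    · -- sig is constant near p: inner bracket vanishes near x
      apply poisson_zero_of_right
      have hU : IsOpen {z : Phase 1 | z.1 0 ∈ Set.Ioo a b} :=
        isOpen_Ioo.preimage ((continuous_apply 0).comp continuous_fst)
      have hev : (poisson (fun z : Phase 1 => F₂ (fun i => sig d (z.1 i), fun i => sig d (z.2 i)))
          (fun z => F₃ (fun i => sig d (z.1 i), fun i => sig d (z.2 i)))) =ᶠ[nhds x]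
          fun _ => (0:ℝ) := by
        filter_upwards [hU.mem_nhds (⟨ha, hb⟩ : x.1 0 ∈ Set.Ioo a b)] with y hy
        apply Finset.sum_eq_zero
        intro i _
        rw [pderivP_comp_zero h₂.1 (sig_smooth d) hy hc i,
            pderivP_comp_zero h₃.1 (sig_smooth d) hy hc i]
        ring
      rw [hev.fderiv_eq, fderiv_const_apply]
    · rcases cover hd (x.2 0) with ⟨c, a, b, ha, hb, hc⟩ | hq
      · -- sig is constant near q
        apply poisson_zero_of_right
        have hU : IsOpen {z : Phase 1 | z.2 0 ∈ Set.Ioo a b} :=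
          isOpen_Ioo.preimage ((continuous_apply 0).comp continuous_snd)
        have hev : (poisson (fun z : Phase 1 => F₂ (fun i => sig d (z.1 i), fun i => sig d (z.2 i)))
            (fun z => F₃ (fun i => sig d (z.1 i), fun i => sig d (z.2 i)))) =ᶠ[nhds x]
            fun _ => (0:ℝ) := by
          filter_upwards [hU.mem_nhds (⟨ha, hb⟩ : x.2 0 ∈ Set.Ioo a b)] with y hy
          apply Finset.sum_eq_zero
          intro i _
          rw [pderivQ_comp_zero h₂.1 (sig_smooth d) hy hc i,
              pderivQ_comp_zero h₃.1 (sig_smooth d) hy hc i]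
          ring
        rw [hev.fderiv_eq, fderiv_const_apply]
      · -- sig' is constant near both p and q: F₁' is locally constant
        obtain ⟨c1, a1, b1, ha1, hb1, hc1⟩ := hp
        obtain ⟨c2, a2, b2, ha2, hb2, hc2⟩ := hq
        apply poisson_zero_of_left
        have hU1 : IsOpen {z : Phase 1 | z.1 0 ∈ Set.Ioo a1 b1} :=
          isOpen_Ioo.preimage ((continuous_apply 0).comp continuous_fst)
        have hU2 : IsOpen {z : Phase 1 | z.2 0 ∈ Set.Ioo a2 b2} :=
          isOpen_Ioo.preimage ((continuous_apply 0).comp continuous_snd)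
        have hev : (fun z : Phase 1 => F₁ (fun i => sig' d (z.1 i), fun i => sig' d (z.2 i)))
            =ᶠ[nhds x] fun _ => F₁ (fun _ => c1, fun _ => c2) := by
          filter_upwards [hU1.mem_nhds (⟨ha1, hb1⟩ : x.1 0 ∈ Set.Ioo a1 b1),
            hU2.mem_nhds (⟨ha2, hb2⟩ : x.2 0 ∈ Set.Ioo a2 b2)] with z hz1 hz2
          have e1 : (fun i : Fin 1 => sig' d (z.1 i)) = fun _ => c1 := by
            funext j
            have hj : j = 0 := Subsingleton.elim j 0
            rw [hj]; exact hc1 _ hz1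
          have e2 : (fun i : Fin 1 => sig' d (z.2 i)) = fun _ => c2 := by
            funext j
            have hj : j = 0 := Subsingleton.elim j 0
            rw [hj]; exact hc2 _ hz2
          rw [e1, e2]
        rw [hev.fderiv_eq, fderiv_const_apply]
end

section
/- (Non-rigidity of the triple bracket.) For every n ≥ 1 there exist functions F, G, H ∈ C_c^∞(ℝ^{2n}) with {F, {G, H}} not identically zero such that for every ε > 0 there exist F', G', H' ∈ C_c^∞(ℝ^{2n}) with ‖F' − F‖ < ε, ‖G' − G‖ < ε, ‖H' − H‖ < ε and {F', {G', H'}} ≡ 0. -/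
open Real Filter Finset Topology

noncomputable section
namespace TBNR

local notation "T" => Real.smoothTransition

/-! ### 1D profiles -/

def bβ (s : ℝ) : ℝ := T (s - 2) * T (8 - s)
def gγ (s : ℝ) : ℝ := T ((12 - s)/2)
def cc (w : ℝ) : ℝ := T (2 - w)
def σ₀ (t : ℝ) : ℝ := T (24*t - 5)
def σ₁ (t : ℝ) : ℝ := T ((8/5)*(t - 3/8))
def th (s : ℝ) : ℝ := T (2*s - 2) * T (20 - 2*s)

def stair (σ : ℝ → ℝ) (K : ℕ) (s : ℝ) : ℝ :=
  1 + (K:ℝ)⁻¹ * ∑ i ∈ Finset.range (9*K), σ ((K:ℝ)*(s-1) - i)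

def W (K : ℕ) : ℝ → ℝ := stair σ₀ K
def τ (K : ℕ) : ℝ → ℝ := stair σ₁ K
def lam (K : ℕ) (s : ℝ) : ℝ := s + th s * (W K s - s)
def eta (K : ℕ) (s : ℝ) : ℝ := 1 + th s * ((W K s - s)/s)

/-! ### Smoothness -/

lemma contDiff_affine (a b : ℝ) : ContDiff ℝ (⊤:ℕ∞) (fun s : ℝ => a*s + b) :=
  (contDiff_const.mul contDiff_id).add contDiff_const

lemma contDiff_T_affine (a b : ℝ) : ContDiff ℝ (⊤:ℕ∞) (fun s : ℝ => T (a*s + b)) :=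
  Real.smoothTransition.contDiff.comp (contDiff_affine a b)

lemma contDiff_bβ : ContDiff ℝ (⊤:ℕ∞) bβ := by
  have h1 := contDiff_T_affine 1 (-2)
  have h2 := contDiff_T_affine (-1) 8
  have : bβ = fun s => T (1*s + -2) * T ((-1)*s + 8) := by
    funext s; simp [bβ]; ring_nf
  rw [this]; exact h1.mul h2

lemma contDiff_gγ : ContDiff ℝ (⊤:ℕ∞) gγ := by
  have h := contDiff_T_affine (-(1/2)) 6
  have : gγ = fun s => T ((-(1/2))*s + 6) := by
    funext s; simp only [gγ]; norm_num; ring_nf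
  rw [this]; exact h

lemma contDiff_cc : ContDiff ℝ (⊤:ℕ∞) cc := by
  have h := contDiff_T_affine (-1) 2
  have : cc = fun s => T ((-1)*s + 2) := by funext s; simp only [cc]; ring_nf
  rw [this]; exact h

lemma contDiff_th : ContDiff ℝ (⊤:ℕ∞) th := by
  have h1 := contDiff_T_affine 2 (-2)
  have h2 := contDiff_T_affine (-2) 20
  have : th = fun s => T (2*s + -2) * T ((-2)*s + 20) := by
    funext s; simp only [th]; ring_nf
  rw [this]; exact h1.mul h2

lemma contDiff_stair (σ : ℝ → ℝ) (hσ : ContDiff ℝ (⊤:ℕ∞) σ) (K : ℕ) :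
    ContDiff ℝ (⊤:ℕ∞) (stair σ K) := by
  unfold stair
  refine contDiff_const.add (contDiff_const.mul ?_)
  refine ContDiff.sum (fun i _ => ?_)
  exact hσ.comp ((contDiff_const.mul (contDiff_id.sub contDiff_const)).sub contDiff_const)

lemma contDiff_σ₀ : ContDiff ℝ (⊤:ℕ∞) σ₀ := by
  have h := contDiff_T_affine 24 (-5)
  have : σ₀ = fun s => T (24*s + -5) := by funext s; simp only [σ₀]; ring_nf
  rw [this]; exact h

lemma contDiff_σ₁ : ContDiff ℝ (⊤:ℕ∞) σ₁ := by
  have h := contDiff_T_affine (8/5) (-(3/5))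
  have : σ₁ = fun s => T ((8/5)*s + -(3/5)) := by funext s; simp only [σ₁]; ring_nf
  rw [this]; exact h

lemma contDiff_W (K : ℕ) : ContDiff ℝ (⊤:ℕ∞) (W K) := contDiff_stair _ contDiff_σ₀ K
lemma contDiff_τ (K : ℕ) : ContDiff ℝ (⊤:ℕ∞) (τ K) := contDiff_stair _ contDiff_σ₁ K

lemma contDiff_lam (K : ℕ) : ContDiff ℝ (⊤:ℕ∞) (lam K) :=
  contDiff_id.add (contDiff_th.mul ((contDiff_W K).sub contDiff_id))

/-! ### Value facts for step profiles -/

lemma σ₀_eq_zero {t : ℝ} (h : t ≤ 5/24) : σ₀ t = 0 :=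
  Real.smoothTransition.zero_of_nonpos (by linarith)

lemma σ₀_eq_one {t : ℝ} (h : 1/4 ≤ t) : σ₀ t = 1 :=
  Real.smoothTransition.one_of_one_le (by linarith)

lemma σ₁_eq_zero {t : ℝ} (h : t ≤ 3/8) : σ₁ t = 0 :=
  Real.smoothTransition.zero_of_nonpos (by nlinarith)

lemma σ₁_eq_one {t : ℝ} (h : 1 ≤ t) : σ₁ t = 1 :=
  Real.smoothTransition.one_of_one_le (by nlinarith)

lemma σ₀_mem {t : ℝ} : σ₀ t ∈ Set.Icc (0:ℝ) 1 :=
  ⟨Real.smoothTransition.nonneg _, Real.smoothTransition.le_one _⟩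

lemma σ₁_mem {t : ℝ} : σ₁ t ∈ Set.Icc (0:ℝ) 1 :=
  ⟨Real.smoothTransition.nonneg _, Real.smoothTransition.le_one _⟩

lemma th_nonneg (s : ℝ) : 0 ≤ th s :=
  mul_nonneg (Real.smoothTransition.nonneg _) (Real.smoothTransition.nonneg _)

lemma th_le_one (s : ℝ) : th s ≤ 1 :=
  mul_le_one₀ (Real.smoothTransition.le_one _) (Real.smoothTransition.nonneg _)
    (Real.smoothTransition.le_one _)

lemma th_eq_zero_left {s : ℝ} (h : s ≤ 1) : th s = 0 := by
  unfold th
  rw [Real.smoothTransition.zero_of_nonpos (by linarith), zero_mul]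

lemma th_eq_zero_right {s : ℝ} (h : 10 ≤ s) : th s = 0 := by
  unfold th
  rw [Real.smoothTransition.zero_of_nonpos (show 20 - 2*s ≤ 0 by linarith), mul_zero]

lemma th_eq_one {s : ℝ} (h1 : 3/2 ≤ s) (h2 : s ≤ 19/2) : th s = 1 := by
  unfold th
  rw [Real.smoothTransition.one_of_one_le (by linarith),
    Real.smoothTransition.one_of_one_le (by linarith), mul_one]

lemma bβ_eq_zero_left {t : ℝ} (h : t ≤ 2) : bβ t = 0 := by
  unfold bβ; rw [Real.smoothTransition.zero_of_nonpos (by linarith), zero_mul]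

lemma bβ_eq_zero_right {t : ℝ} (h : 8 ≤ t) : bβ t = 0 := by
  unfold bβ; rw [Real.smoothTransition.zero_of_nonpos (show 8 - t ≤ 0 by linarith), mul_zero]

lemma gγ_eq_one {s : ℝ} (h : s ≤ 10) : gγ s = 1 :=
  Real.smoothTransition.one_of_one_le (by linarith)

lemma gγ_eq_zero {s : ℝ} (h : 12 ≤ s) : gγ s = 0 :=
  Real.smoothTransition.zero_of_nonpos (by linarith)

lemma gγ_nonneg (s : ℝ) : 0 ≤ gγ s := Real.smoothTransition.nonneg _
lemma gγ_le_one (s : ℝ) : gγ s ≤ 1 := Real.smoothTransition.le_one _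
lemma cc_nonneg (w : ℝ) : 0 ≤ cc w := Real.smoothTransition.nonneg _
lemma cc_le_one (w : ℝ) : cc w ≤ 1 := Real.smoothTransition.le_one _
lemma cc_eq_one {w : ℝ} (h : w ≤ 1) : cc w = 1 :=
  Real.smoothTransition.one_of_one_le (by linarith)
lemma cc_eq_zero {w : ℝ} (h : 2 ≤ w) : cc w = 0 :=
  Real.smoothTransition.zero_of_nonpos (by linarith)

/-- generic staircase estimate -/
lemma stair_sum_bounds (σ : ℝ → ℝ) (h0 : ∀ t ≤ (0:ℝ), σ t = 0) (h1 : ∀ t, (1:ℝ) ≤ t → σ t = 1)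
    (hm : ∀ t, σ t ∈ Set.Icc (0:ℝ) 1) (N : ℕ) (x : ℝ) (hx0 : 0 ≤ x) (hxN : x ≤ N) :
    |(∑ i ∈ Finset.range N, σ (x - i)) - x| ≤ 1 := by
  classical
  set S : Finset ℕ := (Finset.range N).filter (fun i => (i:ℝ) ≤ x - 1) with hS
  have hsplit := Finset.sum_filter_add_sum_filter_not (Finset.range N)
    (fun i => (i:ℝ) ≤ x - 1) (fun i => σ (x - i))
  have hones : ∀ i ∈ S, σ (x - i) = 1 := by
    intro i hi
    rw [hS, Finset.mem_filter] at hi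
    exact h1 _ (by linarith [hi.2])
  have hSsum : ∑ i ∈ S, σ (x - i) = (S.card : ℝ) := by
    rw [Finset.sum_congr rfl hones]; simp
  -- the complement contributes between 0 and 1
  set Sc : Finset ℕ := (Finset.range N).filter (fun i => ¬ ((i:ℝ) ≤ x - 1)) with hSc
  have hcompl_le : ∑ i ∈ Sc, σ (x - i) ≤ 1 := by
    have hterm : ∀ i ∈ Sc, σ (x - i) ≤ (if i = Nat.floor x then 1 else 0) := by
      intro i hi
      rw [hSc, Finset.mem_filter] at hi
      by_cases hij : i = Nat.floor x
      · simp [hij, (hm _).2]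
      · simp only [hij, if_false]
        -- i > x - 1 and i ≠ ⌊x⌋ ⇒ i ≥ ⌊x⌋+1 > x ⇒ σ = 0
        have hgt : x - 1 < i := by push_neg at hi; exact hi.2
        have hige : Nat.floor x ≤ i := by
          by_contra hlt
          push_neg at hlt
          have : (i:ℝ) ≤ (Nat.floor x : ℝ) - 1 := by
            have : i + 1 ≤ Nat.floor x := hlt
            have := (Nat.cast_le (α := ℝ)).2 this
            push_cast at this ⊢; linarith
          have hfl : (Nat.floor x : ℝ) ≤ x := Nat.floor_le hx0
          linarith
        have hig : Nat.floor x + 1 ≤ i := by omega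
        have : x < i := by
          have h2 := (Nat.cast_le (α := ℝ)).2 hig
          push_cast at h2
          have := Nat.lt_floor_add_one x
          linarith
        have := h0 (x - i) (by linarith)
        simp [this]
    calc ∑ i ∈ Sc, σ (x - i) ≤ ∑ i ∈ Sc, (if i = Nat.floor x then 1 else 0) :=
          Finset.sum_le_sum hterm
      _ ≤ 1 := by rw [Finset.sum_ite_eq' Sc (Nat.floor x) (fun _ => (1:ℝ))]; split <;> norm_num
  have hcompl_ge : (0:ℝ) ≤ ∑ i ∈ Sc, σ (x - i) :=
    Finset.sum_nonneg (fun i _ => (hm _).1)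
  -- card bounds for S
  have hcard_ub : (S.card : ℝ) ≤ x := by
    by_cases hx1 : 1 ≤ x
    · have hsub : S ⊆ Finset.range (Nat.floor (x-1) + 1) := by
        intro i hi
        rw [hS, Finset.mem_filter] at hi
        rw [Finset.mem_range]
        exact Nat.lt_succ_of_le (Nat.le_floor hi.2)
      have := Finset.card_le_card hsub
      rw [Finset.card_range] at this
      have h2 := (Nat.cast_le (α := ℝ)).2 this
      push_cast at h2
      have := Nat.floor_le (show (0:ℝ) ≤ x - 1 by linarith)
      linarith
    · have : S = ∅ := by
        rw [hS, Finset.filter_eq_empty_iff]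
        intro i _
        push_neg
        have : (0:ℝ) ≤ (i:ℝ) := Nat.cast_nonneg i
        linarith [not_le.mp hx1]
      simp [this]; linarith
  have hcard_lb : x - 1 ≤ (S.card : ℝ) := by
    by_cases hx1 : 1 ≤ x
    · have hsub : Finset.range (Nat.floor (x-1) + 1) ⊆ S := by
        intro i hi
        rw [Finset.mem_range] at hi
        have hi' : i ≤ Nat.floor (x-1) := Nat.lt_succ_iff.mp hi
        have hile : (i:ℝ) ≤ x - 1 := by
          have h2 := (Nat.cast_le (α := ℝ)).2 hi'
          have := Nat.floor_le (show (0:ℝ) ≤ x - 1 by linarith)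
          linarith
        rw [hS, Finset.mem_filter, Finset.mem_range]
        refine ⟨?_, hile⟩
        have : (i:ℝ) < N := by linarith
        exact_mod_cast this
      have := Finset.card_le_card hsub
      rw [Finset.card_range] at this
      have h2 := (Nat.cast_le (α := ℝ)).2 this
      push_cast at h2
      have := Nat.lt_floor_add_one (x-1)
      linarith
    · linarith [Nat.cast_nonneg (α := ℝ) S.card, not_le.mp hx1]
  rw [← hsplit, hSsum]
  rw [abs_le]
  constructor <;> linarith


lemma stair_eq_left (σ : ℝ → ℝ) (h0 : ∀ t ≤ (0:ℝ), σ t = 0) (K : ℕ) {s : ℝ} (hs : s ≤ 1) :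
    stair σ K s = 1 := by
  unfold stair
  have : ∀ i ∈ Finset.range (9*K), σ ((K:ℝ)*(s-1) - i) = 0 := by
    intro i _
    refine h0 _ ?_
    have h1 : (K:ℝ)*(s-1) ≤ 0 := mul_nonpos_of_nonneg_of_nonpos (Nat.cast_nonneg K) (by linarith)
    have h2 : (0:ℝ) ≤ i := Nat.cast_nonneg i
    linarith
  rw [Finset.sum_congr rfl this]
  simp

lemma stair_eq_right (σ : ℝ → ℝ) (h1 : ∀ t, (1:ℝ) ≤ t → σ t = 1) (K : ℕ) (hK : 1 ≤ K)
    {s : ℝ} (hs : 10 ≤ s) : stair σ K s = 10 := by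
  unfold stair
  have : ∀ i ∈ Finset.range (9*K), σ ((K:ℝ)*(s-1) - i) = 1 := by
    intro i hi
    refine h1 _ ?_
    rw [Finset.mem_range] at hi
    have hi' : (i:ℝ) ≤ 9*K - 1 := by
      have : i + 1 ≤ 9*K := hi
      have := (Nat.cast_le (α := ℝ)).2 this
      push_cast at this
      linarith
    have h9 : (9:ℝ)*K ≤ (K:ℝ)*(s-1) := by
      have hK' : (1:ℝ) ≤ K := by exact_mod_cast hK
      nlinarith
    linarith
  rw [Finset.sum_congr rfl this]
  have hK' : (K:ℝ) ≠ 0 := by positivity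
  field_simp
  simp only [Finset.sum_const, Finset.card_range, nsmul_eq_mul, mul_one]; push_cast; ring

lemma stair_close (σ : ℝ → ℝ) (h0 : ∀ t ≤ (0:ℝ), σ t = 0) (h1 : ∀ t, (1:ℝ) ≤ t → σ t = 1)
    (hm : ∀ t, σ t ∈ Set.Icc (0:ℝ) 1) (K : ℕ) (hK : 1 ≤ K) {s : ℝ} (hs1 : 1 ≤ s)
    (hs2 : s ≤ 10) : |stair σ K s - s| ≤ (K:ℝ)⁻¹ := by
  have hKpos : (0:ℝ) < K := by exact_mod_cast hK
  have hb := stair_sum_bounds σ h0 h1 hm (9*K) ((K:ℝ)*(s-1))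
    (by nlinarith) (by push_cast; nlinarith)
  unfold stair
  have : 1 + (K:ℝ)⁻¹ * (∑ i ∈ Finset.range (9*K), σ ((K:ℝ)*(s-1) - i)) - s
      = (K:ℝ)⁻¹ * ((∑ i ∈ Finset.range (9*K), σ ((K:ℝ)*(s-1) - i)) - (K:ℝ)*(s-1)) := by
    field_simp
    ring
  rw [this, abs_mul, abs_of_nonneg (by positivity : (0:ℝ) ≤ (K:ℝ)⁻¹)]
  calc (K:ℝ)⁻¹ * |(∑ i ∈ Finset.range (9*K), σ ((K:ℝ)*(s-1) - i)) - (K:ℝ)*(s-1)|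
      ≤ (K:ℝ)⁻¹ * 1 := by
        exact mul_le_mul_of_nonneg_left hb (by positivity)
    _ = (K:ℝ)⁻¹ := mul_one _

/-! ### Specialized staircase facts -/

lemma W_eq_left (K : ℕ) {s : ℝ} (hs : s ≤ 1) : W K s = 1 :=
  stair_eq_left _ (fun t ht => σ₀_eq_zero (by linarith)) K hs
lemma W_eq_right (K : ℕ) (hK : 1 ≤ K) {s : ℝ} (hs : 10 ≤ s) : W K s = 10 :=
  stair_eq_right _ (fun t ht => σ₀_eq_one (by linarith)) K hK hs
lemma W_close (K : ℕ) (hK : 1 ≤ K) {s : ℝ} (hs1 : 1 ≤ s) (hs2 : s ≤ 10) :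
    |W K s - s| ≤ (K:ℝ)⁻¹ :=
  stair_close _ (fun t ht => σ₀_eq_zero (by linarith))
    (fun t ht => σ₀_eq_one (by linarith)) (fun t => σ₀_mem) K hK hs1 hs2

lemma τ_eq_left (K : ℕ) {s : ℝ} (hs : s ≤ 1) : τ K s = 1 :=
  stair_eq_left _ (fun t ht => σ₁_eq_zero (by linarith)) K hs
lemma τ_eq_right (K : ℕ) (hK : 1 ≤ K) {s : ℝ} (hs : 10 ≤ s) : τ K s = 10 :=
  stair_eq_right _ (fun t ht => σ₁_eq_one ht) K hK hs
lemma τ_close (K : ℕ) (hK : 1 ≤ K) {s : ℝ} (hs1 : 1 ≤ s) (hs2 : s ≤ 10) :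
    |τ K s - s| ≤ (K:ℝ)⁻¹ :=
  stair_close _ (fun t ht => σ₁_eq_zero (by linarith))
    (fun t ht => σ₁_eq_one ht) (fun t => σ₁_mem) K hK hs1 hs2

lemma lam_eq_left (K : ℕ) {s : ℝ} (hs : s ≤ 1) : lam K s = s := by
  unfold lam; rw [th_eq_zero_left hs]; ring
lemma lam_eq_right (K : ℕ) {s : ℝ} (hs : 10 ≤ s) : lam K s = s := by
  unfold lam; rw [th_eq_zero_right hs]; ring

lemma lam_close (K : ℕ) (hK : 1 ≤ K) (s : ℝ) : |lam K s - s| ≤ (K:ℝ)⁻¹ := by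
  have hKi : (0:ℝ) ≤ (K:ℝ)⁻¹ := by positivity
  rcases le_or_gt s 1 with h | h
  · rw [lam_eq_left K h]; simpa using hKi
  rcases le_or_gt 10 s with h2 | h2
  · rw [lam_eq_right K h2]; simpa using hKi
  · have hW := W_close K hK h.le h2.le
    unfold lam
    have : |s + th s * (W K s - s) - s| = th s * |W K s - s| := by
      rw [show s + th s * (W K s - s) - s = th s * (W K s - s) by ring,
        abs_mul, abs_of_nonneg (th_nonneg s)]
    rw [this]
    calc th s * |W K s - s| ≤ 1 * (K:ℝ)⁻¹ :=
          mul_le_mul (th_le_one s) hW (abs_nonneg _) zero_le_one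
      _ = (K:ℝ)⁻¹ := one_mul _

lemma eta_mul_self (K : ℕ) (s : ℝ) : eta K s * s = lam K s := by
  rcases eq_or_ne s 0 with rfl | hs
  · simp [eta, lam, th_eq_zero_left (by norm_num : (0:ℝ) ≤ 1)]
  · unfold eta lam; field_simp

lemma eta_eq_one_left (K : ℕ) {s : ℝ} (hs : s ≤ 1) : eta K s = 1 := by
  unfold eta; rw [th_eq_zero_left hs]; ring

/-! ### The dichotomy: near every point, either `bβ ∘ τ K` or `lam K` is locally constant -/

lemma tau_lt_2 (K : ℕ) (hK : 20 ≤ K) {s' : ℝ} (h : s' < 7/4) : τ K s' < 2 := by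
  have hK1 : 1 ≤ K := by omega
  rcases le_or_gt s' 1 with h1 | h1
  · rw [τ_eq_left K h1]; norm_num
  · have := τ_close K hK1 h1.le (by linarith)
    have hKi : (K:ℝ)⁻¹ ≤ 1/20 := by
      rw [inv_le_comm₀ (by positivity) (by norm_num)]
      norm_num
      exact_mod_cast hK
    rw [abs_le] at this
    linarith [this.2]

lemma tau_gt_8 (K : ℕ) (hK : 20 ≤ K) {s' : ℝ} (h : 33/4 < s') : 8 < τ K s' := by
  have hK1 : 1 ≤ K := by omega
  rcases le_or_gt 10 s' with h1 | h1
  · rw [τ_eq_right K hK1 h1]; norm_num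
  · have := τ_close K hK1 (by linarith) h1.le
    have hKi : (K:ℝ)⁻¹ ≤ 1/20 := by
      rw [inv_le_comm₀ (by positivity) (by norm_num)]
      norm_num
      exact_mod_cast hK
    rw [abs_le] at this
    linarith [this.1]

lemma dichotomy (K : ℕ) (hK : 20 ≤ K) (s : ℝ) :
    (∃ c, ∀ᶠ s' in 𝓝 s, bβ (τ K s') = c) ∨
    ((3/2:ℝ) < s ∧ ∃ C, ∀ᶠ s' in 𝓝 s, lam K s' = C) := by
  have hKpos : (0:ℝ) < K := by positivity
  rcases lt_or_ge s (7/4) with hs | hs1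
  · left
    refine ⟨0, Filter.eventually_of_mem (Iio_mem_nhds hs) (fun s' hs' => ?_)⟩
    exact bβ_eq_zero_left (tau_lt_2 K hK hs').le
  rcases lt_or_ge (33/4) s with hs | hs2
  · left
    refine ⟨0, Filter.eventually_of_mem (Ioi_mem_nhds hs) (fun s' hs' => ?_)⟩
    exact bβ_eq_zero_right (tau_gt_8 K hK hs').le
  -- middle regime
  set x : ℝ := (K:ℝ)*(s-1) with hxdef
  have hx0 : (15:ℝ) ≤ x := by
    have : (20:ℝ) ≤ K := by exact_mod_cast hK
    nlinarith
  set j : ℕ := Nat.floor x with hjdef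
  have hjle : (j:ℝ) ≤ x := Nat.floor_le (by linarith)
  have hjgt : x < (j:ℝ) + 1 := Nat.lt_floor_add_one x
  set m : ℝ := x - j with hmdef
  have hm0 : 0 ≤ m := by simp only [hmdef]; linarith
  have hm1 : m < 1 := by simp only [hmdef]; linarith
  set δ : ℝ := 1/(100*(K:ℝ)) with hδdef
  have hδpos : 0 < δ := by positivity
  have hIoo : Set.Ioo (s-δ) (s+δ) ∈ 𝓝 s := Ioo_mem_nhds (by linarith) (by linarith)
  have hxdist : ∀ s' ∈ Set.Ioo (s-δ) (s+δ), |(K:ℝ)*(s'-1) - x| < 1/100 := by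
    intro s' hs'
    have h1 : (K:ℝ)*(s'-1) - x = (K:ℝ)*(s'-s) := by rw [hxdef]; ring
    rw [h1, abs_mul, abs_of_nonneg (le_of_lt hKpos)]
    have h2 : |s' - s| < δ := by
      rw [abs_lt]; exact ⟨by linarith [hs'.1], by linarith [hs'.2]⟩
    calc (K:ℝ) * |s'-s| < (K:ℝ) * δ := by
          exact mul_lt_mul_of_pos_left h2 hKpos
      _ = 1/100 := by rw [hδdef]; field_simp
  have hθ1 : ∀ s' ∈ Set.Ioo (s-δ) (s+δ), th s' = 1 := by
    intro s' hs'
    have hδle : δ ≤ 1/2000 := by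
      rw [hδdef]
      rw [div_le_div_iff₀ (by positivity) (by norm_num)]
      have : (20:ℝ) ≤ K := by exact_mod_cast hK
      linarith
    exact th_eq_one (by linarith [hs'.1]) (by linarith [hs'.2])
  rcases lt_or_ge m (3/20) with hmc | hmc
  · -- CaseB with threshold j-1 : W locally constant
    right
    refine ⟨by linarith, W K s, Filter.eventually_of_mem hIoo (fun s' hs' => ?_)⟩
    have hWconst : ∀ s'' ∈ Set.Ioo (s-δ) (s+δ), W K s'' = W K s := by
      intro s'' hs''
      have hterm : ∀ s₀ ∈ Set.Ioo (s-δ) (s+δ), ∀ i ∈ Finset.range (9*K),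
          σ₀ ((K:ℝ)*(s₀-1) - i) = (if (i:ℝ) ≤ (j:ℝ) - 1/2 then 1 else 0) := by
        intro s₀ hs₀ i _
        have hd := hxdist s₀ hs₀
        rw [abs_lt] at hd
        by_cases hij : (i:ℝ) ≤ (j:ℝ) - 1/2
        · rw [if_pos hij]
          have hij' : (i:ℝ) ≤ (j:ℝ) - 1 := by
            have : i < j := by exact_mod_cast (by linarith : (i:ℝ) < (j:ℝ))
            have : i + 1 ≤ j := this
            have := (Nat.cast_le (α := ℝ)).2 this
            push_cast at this; linarith
          exact σ₀_eq_one (by linarith)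
        · rw [if_neg hij]
          push_neg at hij
          have hij' : (j:ℝ) ≤ (i:ℝ) := by
            have h1 : j < i + 1 := by exact_mod_cast (by linarith : (j:ℝ) < (i:ℝ) + 1)
            have h2 : j ≤ i := by omega
            exact_mod_cast h2
          exact σ₀_eq_zero (by linarith)
      unfold W stair
      rw [Finset.sum_congr rfl (hterm s'' hs''), Finset.sum_congr rfl (hterm s
        ⟨by linarith, by linarith⟩)]
    have hWs' := hWconst s' hs'
    unfold lam
    rw [hθ1 s' hs', hWs']
    ring
  rcases lt_or_ge m (7/20) with hmc2 | hmc2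
  · -- CaseA : τ locally constant
    left
    refine ⟨bβ (τ K s), Filter.eventually_of_mem hIoo (fun s' hs' => ?_)⟩
    have hτconst : ∀ s'' ∈ Set.Ioo (s-δ) (s+δ), τ K s'' = τ K s := by
      intro s'' hs''
      have hterm : ∀ s₀ ∈ Set.Ioo (s-δ) (s+δ), ∀ i ∈ Finset.range (9*K),
          σ₁ ((K:ℝ)*(s₀-1) - i) = (if (i:ℝ) ≤ (j:ℝ) - 1/2 then 1 else 0) := by
        intro s₀ hs₀ i _
        have hd := hxdist s₀ hs₀
        rw [abs_lt] at hd
        by_cases hij : (i:ℝ) ≤ (j:ℝ) - 1/2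
        · rw [if_pos hij]
          have hij' : (i:ℝ) ≤ (j:ℝ) - 1 := by
            have : i < j := by exact_mod_cast (by linarith : (i:ℝ) < (j:ℝ))
            have : i + 1 ≤ j := this
            have := (Nat.cast_le (α := ℝ)).2 this
            push_cast at this; linarith
          exact σ₁_eq_one (by linarith)
        · rw [if_neg hij]
          push_neg at hij
          have hij' : (j:ℝ) ≤ (i:ℝ) := by
            have h1 : j < i + 1 := by exact_mod_cast (by linarith : (j:ℝ) < (i:ℝ) + 1)
            have h2 : j ≤ i := by omega
            exact_mod_cast h2
          exact σ₁_eq_zero (by linarith)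
      unfold τ stair
      rw [Finset.sum_congr rfl (hterm s'' hs''), Finset.sum_congr rfl (hterm s
        ⟨by linarith, by linarith⟩)]
    rw [hτconst s' hs']
  · -- CaseB with threshold j : W locally constant
    right
    refine ⟨by linarith, W K s, Filter.eventually_of_mem hIoo (fun s' hs' => ?_)⟩
    have hWconst : ∀ s'' ∈ Set.Ioo (s-δ) (s+δ), W K s'' = W K s := by
      intro s'' hs''
      have hterm : ∀ s₀ ∈ Set.Ioo (s-δ) (s+δ), ∀ i ∈ Finset.range (9*K),
          σ₀ ((K:ℝ)*(s₀-1) - i) = (if (i:ℝ) ≤ (j:ℝ) + 1/2 then 1 else 0) := by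
        intro s₀ hs₀ i _
        have hd := hxdist s₀ hs₀
        rw [abs_lt] at hd
        by_cases hij : (i:ℝ) ≤ (j:ℝ) + 1/2
        · rw [if_pos hij]
          have hij' : (i:ℝ) ≤ (j:ℝ) := by
            have : i < j + 1 := by exact_mod_cast (by push_cast; linarith : (i:ℝ) < (j:ℝ) + 1)
            have : i ≤ j := by omega
            exact_mod_cast this
          exact σ₀_eq_one (by linarith)
        · rw [if_neg hij]
          push_neg at hij
          have hij' : (j:ℝ) + 1 ≤ (i:ℝ) := by
            have : j + 1 ≤ i := by
              have : j < i := by exact_mod_cast (by linarith : (j:ℝ) < (i:ℝ))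
              omega
            exact_mod_cast this
          exact σ₀_eq_zero (by linarith)
      unfold W stair
      rw [Finset.sum_congr rfl (hterm s'' hs''), Finset.sum_congr rfl (hterm s
        ⟨by linarith, by linarith⟩)]
    have hWs' := hWconst s' hs'
    unfold lam
    rw [hθ1 s' hs', hWs']
    ring

/-! ### Calculus on `ℝ³` -/

abbrev R3 := ℝ × ℝ × ℝ

def Da (f : R3 → ℝ) (y : R3) : ℝ := fderiv ℝ f y (1,0,0)
def Db (f : R3 → ℝ) (y : R3) : ℝ := fderiv ℝ f y (0,1,0)
def Dw (f : R3 → ℝ) (y : R3) : ℝ := fderiv ℝ f y (0,0,1)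
def bra (f g : R3 → ℝ) (y : R3) : ℝ := Db f y * Da g y - Da f y * Db g y

lemma contDiff_Da {f : R3 → ℝ} (hf : ContDiff ℝ (⊤:ℕ∞) f) : ContDiff ℝ (⊤:ℕ∞) (Da f) :=
  (hf.fderiv_right (by exact_mod_cast le_top)).clm_apply contDiff_const
lemma contDiff_Db {f : R3 → ℝ} (hf : ContDiff ℝ (⊤:ℕ∞) f) : ContDiff ℝ (⊤:ℕ∞) (Db f) :=
  (hf.fderiv_right (by exact_mod_cast le_top)).clm_apply contDiff_const
lemma contDiff_bra {f g : R3 → ℝ} (hf : ContDiff ℝ (⊤:ℕ∞) f) (hg : ContDiff ℝ (⊤:ℕ∞) g) :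
    ContDiff ℝ (⊤:ℕ∞) (bra f g) :=
  ((contDiff_Db hf).mul (contDiff_Da hg)).sub ((contDiff_Da hf).mul (contDiff_Db hg))

lemma Da_congr {f g : R3 → ℝ} {y : R3} (h : f =ᶠ[𝓝 y] g) : Da f y = Da g y := by
  unfold Da; rw [h.fderiv_eq]
lemma Db_congr {f g : R3 → ℝ} {y : R3} (h : f =ᶠ[𝓝 y] g) : Db f y = Db g y := by
  unfold Db; rw [h.fderiv_eq]
lemma Da_of_hasFDerivAt {f : R3 → ℝ} {L : R3 →L[ℝ] ℝ} {y : R3} (h : HasFDerivAt f L y) :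
    Da f y = L (1,0,0) := by unfold Da; rw [h.fderiv]
lemma Db_of_hasFDerivAt {f : R3 → ℝ} {L : R3 →L[ℝ] ℝ} {y : R3} (h : HasFDerivAt f L y) :
    Db f y = L (0,1,0) := by unfold Db; rw [h.fderiv]

/-- coordinate continuous linear maps -/
def CA : R3 →L[ℝ] ℝ := ContinuousLinearMap.fst ℝ ℝ (ℝ×ℝ)
def CB : R3 →L[ℝ] ℝ := (ContinuousLinearMap.fst ℝ ℝ ℝ).comp (ContinuousLinearMap.snd ℝ ℝ (ℝ×ℝ))
def CW : R3 →L[ℝ] ℝ := (ContinuousLinearMap.snd ℝ ℝ ℝ).comp (ContinuousLinearMap.snd ℝ ℝ (ℝ×ℝ))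

@[simp] lemma CA_apply (v : R3) : CA v = v.1 := rfl
@[simp] lemma CB_apply (v : R3) : CB v = v.2.1 := rfl
@[simp] lemma CW_apply (v : R3) : CW v = v.2.2 := rfl

lemma hasFDerivAt_a (y : R3) : HasFDerivAt (fun z : R3 => z.1) CA y := CA.hasFDerivAt
lemma hasFDerivAt_b (y : R3) : HasFDerivAt (fun z : R3 => z.2.1) CB y := CB.hasFDerivAt
lemma hasFDerivAt_w (y : R3) : HasFDerivAt (fun z : R3 => z.2.2) CW y := CW.hasFDerivAt

def s3 (y : R3) : ℝ := y.1*y.1 + y.2.1*y.2.1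

lemma contDiff_s3 : ContDiff ℝ (⊤:ℕ∞) s3 := by
  have ha : ContDiff ℝ (⊤:ℕ∞) (fun z : R3 => z.1) := contDiff_fst
  have hb : ContDiff ℝ (⊤:ℕ∞) (fun z : R3 => z.2.1) := contDiff_snd.fst
  exact (ha.mul ha).add (hb.mul hb)

lemma hasFDerivAt_s3 (y : R3) :
    HasFDerivAt s3 ((y.1 • CA + y.1 • CA) + (y.2.1 • CB + y.2.1 • CB)) y :=
  ((hasFDerivAt_a y).mul (hasFDerivAt_a y)).add ((hasFDerivAt_b y).mul (hasFDerivAt_b y))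

lemma s3_nonneg (y : R3) : 0 ≤ s3 y := by unfold s3; nlinarith [sq_nonneg y.1, sq_nonneg y.2.1]

/-! ### The six model functions on `ℝ³` -/

def ΘF : R3 → ℝ := fun y => bβ (s3 y) * cc y.2.2
def ΘG : R3 → ℝ := fun y => (y.1*y.1/2) * gγ (s3 y) * cc y.2.2
def ΘH : R3 → ℝ := fun y => (y.2.1*y.2.1/2) * gγ (s3 y) * cc y.2.2
def ΘF' (K : ℕ) : R3 → ℝ := fun y => bβ (τ K (s3 y)) * cc y.2.2
def ΘG' (K : ℕ) : R3 → ℝ :=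
  fun y => (eta K (s3 y) * (y.1*y.1) / 2) * gγ (lam K (s3 y)) * cc y.2.2
def ΘH' (K : ℕ) : R3 → ℝ :=
  fun y => (eta K (s3 y) * (y.2.1*y.2.1) / 2) * gγ (lam K (s3 y)) * cc y.2.2

lemma contDiff_eta (K : ℕ) : ContDiff ℝ (⊤:ℕ∞) (eta K) := by
  rw [contDiff_iff_contDiffAt]
  intro s
  rcases lt_or_ge s 1 with hs | hs
  · have hev : eta K =ᶠ[𝓝 s] (fun _ => 1) :=
      Filter.eventually_of_mem (Iio_mem_nhds hs) (fun u hu => eta_eq_one_left K hu.le)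
    exact (contDiffAt_const (c := (1:ℝ))).congr_of_eventuallyEq hev
  · have hs0 : s ≠ 0 := by linarith
    refine ContDiffAt.add contDiffAt_const ?_
    refine ContDiffAt.mul (contDiff_th.contDiffAt) ?_
    exact ContDiffAt.div (((contDiff_W K).sub contDiff_id).contDiffAt) contDiffAt_id hs0

lemma contDiff_cc_w : ContDiff ℝ (⊤:ℕ∞) (fun y : R3 => cc y.2.2) :=
  contDiff_cc.comp contDiff_snd.snd

lemma contDiff_ΘF : ContDiff ℝ (⊤:ℕ∞) ΘF :=
  ((contDiff_bβ.comp contDiff_s3)).mul contDiff_cc_w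
lemma contDiff_ΘG : ContDiff ℝ (⊤:ℕ∞) ΘG :=
  (((contDiff_fst.mul contDiff_fst).div_const 2).mul (contDiff_gγ.comp contDiff_s3)).mul
    contDiff_cc_w
lemma contDiff_ΘH : ContDiff ℝ (⊤:ℕ∞) ΘH :=
  ((((contDiff_snd.fst).mul (contDiff_snd.fst)).div_const 2).mul
    (contDiff_gγ.comp contDiff_s3)).mul contDiff_cc_w
lemma contDiff_ΘF' (K : ℕ) : ContDiff ℝ (⊤:ℕ∞) (ΘF' K) :=
  (contDiff_bβ.comp ((contDiff_τ K).comp contDiff_s3)).mul contDiff_cc_w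
lemma contDiff_ΘG' (K : ℕ) : ContDiff ℝ (⊤:ℕ∞) (ΘG' K) :=
  (((((contDiff_eta K).comp contDiff_s3).mul (contDiff_fst.mul contDiff_fst)).div_const 2).mul
    (contDiff_gγ.comp ((contDiff_lam K).comp contDiff_s3))).mul contDiff_cc_w
lemma contDiff_ΘH' (K : ℕ) : ContDiff ℝ (⊤:ℕ∞) (ΘH' K) :=
  (((((contDiff_eta K).comp contDiff_s3).mul ((contDiff_snd.fst).mul (contDiff_snd.fst))).div_const
    2).mul (contDiff_gγ.comp ((contDiff_lam K).comp contDiff_s3))).mul contDiff_cc_w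

/-! ### Pointwise computations on `ℝ³` -/

lemma hasDerivAt_bβ (s : ℝ) : HasDerivAt bβ (deriv bβ s) s :=
  (contDiff_bβ.differentiable (by simp) s).hasDerivAt
lemma hasDerivAt_cc (w : ℝ) : HasDerivAt cc (deriv cc w) w :=
  (contDiff_cc.differentiable (by simp) w).hasDerivAt

lemma DaPG (y : R3) : Da (fun z : R3 => (1/2) * (z.1*z.1)) y = y.1 := by
  rw [Da_of_hasFDerivAt (((hasFDerivAt_a y).fun_mul (hasFDerivAt_a y)).const_mul (1/2))]
  simp; ring
lemma DbPG (y : R3) : Db (fun z : R3 => (1/2) * (z.1*z.1)) y = 0 := by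
  rw [Db_of_hasFDerivAt (((hasFDerivAt_a y).fun_mul (hasFDerivAt_a y)).const_mul (1/2))]
  simp
lemma DaPH (y : R3) : Da (fun z : R3 => (1/2) * (z.2.1*z.2.1)) y = 0 := by
  rw [Da_of_hasFDerivAt (((hasFDerivAt_b y).fun_mul (hasFDerivAt_b y)).const_mul (1/2))]
  simp
lemma DbPH (y : R3) : Db (fun z : R3 => (1/2) * (z.2.1*z.2.1)) y = y.2.1 := by
  rw [Db_of_hasFDerivAt (((hasFDerivAt_b y).fun_mul (hasFDerivAt_b y)).const_mul (1/2))]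
  simp; ring
lemma DaPXi (y : R3) : Da (fun z : R3 => -(z.1*z.2.1)) y = -y.2.1 := by
  rw [Da_of_hasFDerivAt (((hasFDerivAt_a y).fun_mul (hasFDerivAt_b y)).fun_neg)]
  simp
lemma DbPXi (y : R3) : Db (fun z : R3 => -(z.1*z.2.1)) y = -y.1 := by
  rw [Db_of_hasFDerivAt (((hasFDerivAt_a y).fun_mul (hasFDerivAt_b y)).fun_neg)]
  simp

lemma DaPF (y : R3) : Da (fun z : R3 => bβ (s3 z)) y = deriv bβ (s3 y) * (y.1 + y.1) := by
  rw [show (fun z : R3 => bβ (s3 z)) = bβ ∘ s3 from rfl,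
    Da_of_hasFDerivAt ((hasDerivAt_bβ (s3 y)).comp_hasFDerivAt y (hasFDerivAt_s3 y))]
  simp; ring
lemma DbPF (y : R3) : Db (fun z : R3 => bβ (s3 z)) y = deriv bβ (s3 y) * (y.2.1 + y.2.1) := by
  rw [show (fun z : R3 => bβ (s3 z)) = bβ ∘ s3 from rfl,
    Db_of_hasFDerivAt ((hasDerivAt_bβ (s3 y)).comp_hasFDerivAt y (hasFDerivAt_s3 y))]
  simp; ring

lemma DaPC (C : ℝ) (y : R3) : Da (fun z : R3 => C * cc z.2.2) y = 0 := by
  rw [show (fun z : R3 => C * cc z.2.2) = (fun z : R3 => C * (cc ∘ (fun v : R3 => v.2.2)) z)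
    from rfl,
    Da_of_hasFDerivAt (((hasDerivAt_cc y.2.2).comp_hasFDerivAt y (hasFDerivAt_w y)).const_mul C)]
  simp
lemma DbPC (C : ℝ) (y : R3) : Db (fun z : R3 => C * cc z.2.2) y = 0 := by
  rw [show (fun z : R3 => C * cc z.2.2) = (fun z : R3 => C * (cc ∘ (fun v : R3 => v.2.2)) z)
    from rfl,
    Db_of_hasFDerivAt (((hasDerivAt_cc y.2.2).comp_hasFDerivAt y (hasFDerivAt_w y)).const_mul C)]
  simp

lemma bra_zone (k : ℝ) (y : R3) (hs : s3 y ≠ 0) :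
    bra (fun z : R3 => k * ((z.1*z.1) * (s3 z)⁻¹) * cc z.2.2)
        (fun z : R3 => k * ((z.2.1*z.2.1) * (s3 z)⁻¹) * cc z.2.2) y = 0 := by
  have hinv : HasFDerivAt (fun z : R3 => (s3 z)⁻¹)
      ((-(s3 y ^ 2)⁻¹) • ((y.1 • CA + y.1 • CA) + (y.2.1 • CB + y.2.1 • CB))) y := by
    exact (hasDerivAt_inv hs).comp_hasFDerivAt y (hasFDerivAt_s3 y)
  have hB : HasFDerivAt (fun z : R3 => cc z.2.2) (deriv cc y.2.2 • CW) y := by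
    have h := (hasDerivAt_cc y.2.2).comp_hasFDerivAt y (hasFDerivAt_w y); exact h
  have hG := ((((hasFDerivAt_a y).fun_mul (hasFDerivAt_a y)).fun_mul hinv).const_mul k).fun_mul hB
  have hH := ((((hasFDerivAt_b y).fun_mul (hasFDerivAt_b y)).fun_mul hinv).const_mul k).fun_mul hB
  unfold bra
  rw [Da_of_hasFDerivAt hG, Db_of_hasFDerivAt hG, Da_of_hasFDerivAt hH, Db_of_hasFDerivAt hH]
  simp only [ContinuousLinearMap.add_apply, ContinuousLinearMap.coe_smul',
    Pi.smul_apply, smul_eq_mul, CA_apply, CB_apply, CW_apply]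
  norm_num
  have hs' : s3 y = y.1*y.1 + y.2.1*y.2.1 := rfl
  field_simp
  ring_nf
  rw [hs']
  ring

lemma DaConst (C : ℝ) (y : R3) : Da (fun _ : R3 => C) y = 0 := by
  rw [Da_of_hasFDerivAt (hasFDerivAt_const C y)]; simp
lemma DbConst (C : ℝ) (y : R3) : Db (fun _ : R3 => C) y = 0 := by
  rw [Db_of_hasFDerivAt (hasFDerivAt_const C y)]; simp

/-! ### The unperturbed triple bracket at the center point -/

def Uset : Set R3 := {y | s3 y < 9 ∧ y.2.2 < 1}

lemma isOpen_Uset : IsOpen Uset := by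
  have h1 : IsOpen {y : R3 | s3 y < 9} := isOpen_lt contDiff_s3.continuous continuous_const
  have h2 : IsOpen {y : R3 | y.2.2 < 1} := isOpen_lt (continuous_snd.snd) continuous_const
  exact h1.inter h2

lemma ΘG_eqU : ∀ y ∈ Uset, ΘG y = (1/2) * (y.1*y.1) := by
  intro y hy
  unfold ΘG
  rw [gγ_eq_one (by linarith [hy.1]), cc_eq_one (le_of_lt hy.2)]
  ring

lemma ΘH_eqU : ∀ y ∈ Uset, ΘH y = (1/2) * (y.2.1*y.2.1) := by
  intro y hy
  unfold ΘH
  rw [gγ_eq_one (by linarith [hy.1]), cc_eq_one (le_of_lt hy.2)]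
  ring

lemma ΘF_eqU : ∀ y ∈ Uset, ΘF y = bβ (s3 y) := by
  intro y hy
  unfold ΘF
  rw [cc_eq_one (le_of_lt hy.2)]
  ring

lemma Xi_eqU : ∀ y ∈ Uset, bra ΘG ΘH y = -(y.1*y.2.1) := by
  intro y hy
  have hGev : ΘG =ᶠ[𝓝 y] fun z => (1/2)*(z.1*z.1) :=
    Filter.eventually_of_mem (isOpen_Uset.mem_nhds hy) ΘG_eqU
  have hHev : ΘH =ᶠ[𝓝 y] fun z => (1/2)*(z.2.1*z.2.1) :=
    Filter.eventually_of_mem (isOpen_Uset.mem_nhds hy) ΘH_eqU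
  unfold bra
  rw [Da_congr hGev, Db_congr hGev, Da_congr hHev, Db_congr hHev,
    DaPG, DbPG, DaPH, DbPH]
  ring

lemma bra_center {s₀ u₀ : ℝ} (h1 : 2 < s₀) (h2 : s₀ < 3) (hu : u₀*u₀ = s₀) :
    bra ΘF (bra ΘG ΘH) (u₀, 0, 0) = deriv bβ s₀ * (2*s₀) := by
  set y₀ : R3 := (u₀, 0, 0) with hy₀
  have hs3 : s3 y₀ = s₀ := by simp [s3, hy₀, hu]
  have hyU : y₀ ∈ Uset := by
    constructor
    · rw [hs3]; linarith
    · norm_num [hy₀]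
  have hXev : bra ΘG ΘH =ᶠ[𝓝 y₀] fun z => -(z.1*z.2.1) :=
    Filter.eventually_of_mem (isOpen_Uset.mem_nhds hyU) Xi_eqU
  have hFev : ΘF =ᶠ[𝓝 y₀] fun z => bβ (s3 z) :=
    Filter.eventually_of_mem (isOpen_Uset.mem_nhds hyU) ΘF_eqU
  show Db ΘF y₀ * Da (bra ΘG ΘH) y₀ - Da ΘF y₀ * Db (bra ΘG ΘH) y₀ = deriv bβ s₀ * (2*s₀)
  rw [Da_congr hXev, Db_congr hXev, Da_congr hFev, Db_congr hFev,
    DaPF, DbPF, DaPXi, DbPXi, hs3]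
  have : y₀.1 = u₀ := rfl
  have h2 : y₀.2.1 = 0 := rfl
  rw [this, h2]
  have hu2 : u₀^2 = s₀ := by nlinarith [hu]
  ring_nf
  rw [hu2]

/-! ### Vanishing of the perturbed triple bracket -/

lemma bra_perturbed (K : ℕ) (hK : 20 ≤ K) (y : R3) :
    bra (ΘF' K) (bra (ΘG' K) (ΘH' K)) y = 0 := by
  rcases dichotomy K hK (s3 y) with ⟨c, hev⟩ | ⟨hgt, C, hev⟩
  · have hs3c : ContinuousAt s3 y := contDiff_s3.continuous.continuousAt
    have hev' : ∀ᶠ z in 𝓝 y, bβ (τ K (s3 z)) = c := hs3c.eventually hev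
    have hFev : ΘF' K =ᶠ[𝓝 y] fun z => c * cc z.2.2 :=
      hev'.mono (fun z hz => by unfold ΘF'; rw [hz])
    unfold bra
    rw [Da_congr hFev, Db_congr hFev, DaPC, DbPC]
    ring
  · have h2 : ∀ᶠ s' in 𝓝 (s3 y), lam K s' = C ∧ 3/2 < s' :=
      hev.and (Filter.eventually_of_mem (Ioi_mem_nhds hgt) (fun _ h => h))
    obtain ⟨V, hVmem, hVC⟩ := h2.exists_mem
    set Z : Set R3 := s3 ⁻¹' (interior V) with hZ
    have hZopen : IsOpen Z := isOpen_interior.preimage contDiff_s3.continuous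
    have hyZ : y ∈ Z := by
      show s3 y ∈ interior V
      rw [mem_interior_iff_mem_nhds]
      exact hVmem
    have hXiz : ∀ z ∈ Z, bra (ΘG' K) (ΘH' K) z = 0 := by
      intro z hz
      have h32 : 3/2 < s3 z := (hVC _ (interior_subset hz)).2
      have hszne : s3 z ≠ 0 := by linarith
      have hzev : ∀ᶠ z' in 𝓝 z, s3 z' ∈ interior V :=
        Filter.eventually_of_mem (hZopen.mem_nhds hz) (fun z' hz' => hz')
      have hGev : ΘG' K =ᶠ[𝓝 z]
          fun z' => (C * gγ C / 2) * ((z'.1*z'.1) * (s3 z')⁻¹) * cc z'.2.2 := by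
        refine hzev.mono (fun z' hz' => ?_)
        have h32' : 3/2 < s3 z' := (hVC _ (interior_subset hz')).2
        have hC' : lam K (s3 z') = C := (hVC _ (interior_subset hz')).1
        have hne : s3 z' ≠ 0 := by linarith
        have heta : eta K (s3 z') = C * (s3 z')⁻¹ := by
          have hh : eta K (s3 z') * s3 z' = C := by rw [eta_mul_self]; exact hC'
          rw [← hh]
          field_simp
        unfold ΘG'
        rw [heta, hC']
        ring
      have hHev : ΘH' K =ᶠ[𝓝 z]
          fun z' => (C * gγ C / 2) * ((z'.2.1*z'.2.1) * (s3 z')⁻¹) * cc z'.2.2 := by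
        refine hzev.mono (fun z' hz' => ?_)
        have h32' : 3/2 < s3 z' := (hVC _ (interior_subset hz')).2
        have hC' : lam K (s3 z') = C := (hVC _ (interior_subset hz')).1
        have hne : s3 z' ≠ 0 := by linarith
        have heta : eta K (s3 z') = C * (s3 z')⁻¹ := by
          have hh : eta K (s3 z') * s3 z' = C := by rw [eta_mul_self]; exact hC'
          rw [← hh]
          field_simp
        unfold ΘH'
        rw [heta, hC']
        ring
      have hrw : bra (ΘG' K) (ΘH' K) z =
          bra (fun z' : R3 => (C * gγ C / 2) * ((z'.1*z'.1) * (s3 z')⁻¹) * cc z'.2.2)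
              (fun z' : R3 => (C * gγ C / 2) * ((z'.2.1*z'.2.1) * (s3 z')⁻¹) * cc z'.2.2) z := by
        unfold bra
        rw [Da_congr hGev, Db_congr hGev, Da_congr hHev, Db_congr hHev]
      rw [hrw]
      exact bra_zone _ z hszne
    have hXev : bra (ΘG' K) (ΘH' K) =ᶠ[𝓝 y] fun _ => 0 :=
      Filter.eventually_of_mem (hZopen.mem_nhds hyZ) hXiz
    show Db (ΘF' K) y * Da (bra (ΘG' K) (ΘH' K)) y
      - Da (ΘF' K) y * Db (bra (ΘG' K) (ΘH' K)) y = 0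
    rw [Da_congr hXev, Db_congr hXev, DaConst, DbConst]
    ring

/-! ### Phase space: pulling back along `κ` -/

variable {n : ℕ} [NeZero n]

def tt (x : Phase n) : ℝ :=
  ∑ i ∈ Finset.univ.erase (0 : Fin n), (x.1 i * x.1 i + x.2 i * x.2 i)

def κ (x : Phase n) : R3 := (x.1 0, x.2 0, tt x)

def Pc (i : Fin n) : Phase n →L[ℝ] ℝ :=
  (ContinuousLinearMap.proj i).comp (ContinuousLinearMap.fst ℝ (Fin n → ℝ) (Fin n → ℝ))
def Qc (i : Fin n) : Phase n →L[ℝ] ℝ :=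
  (ContinuousLinearMap.proj i).comp (ContinuousLinearMap.snd ℝ (Fin n → ℝ) (Fin n → ℝ))

@[simp] lemma Pc_apply (i : Fin n) (x : Phase n) : Pc i x = x.1 i := rfl
@[simp] lemma Qc_apply (i : Fin n) (x : Phase n) : Qc i x = x.2 i := rfl

def Ltt (x : Phase n) : Phase n →L[ℝ] ℝ :=
  ∑ i ∈ Finset.univ.erase (0 : Fin n),
    ((x.1 i • Pc i + x.1 i • Pc i) + (x.2 i • Qc i + x.2 i • Qc i))

lemma hasFDerivAt_tt (x : Phase n) : HasFDerivAt tt (Ltt x) x := by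
  unfold tt Ltt
  refine HasFDerivAt.fun_sum (fun i _ => ?_)
  exact ((Pc i).hasFDerivAt.mul (Pc i).hasFDerivAt).add
    ((Qc i).hasFDerivAt.mul (Qc i).hasFDerivAt)

def Lκ (x : Phase n) : Phase n →L[ℝ] R3 := (Pc 0).prod ((Qc 0).prod (Ltt x))

lemma hasFDerivAt_κ (x : Phase n) : HasFDerivAt κ (Lκ x) x := by
  exact ((Pc 0).hasFDerivAt.prodMk ((Qc 0).hasFDerivAt.prodMk (hasFDerivAt_tt x)))

lemma contDiff_tt : ContDiff ℝ (⊤:ℕ∞) (tt (n := n)) := by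
  unfold tt
  refine ContDiff.sum (fun i _ => ?_)
  exact ((Pc i).contDiff.mul (Pc i).contDiff).add ((Qc i).contDiff.mul (Qc i).contDiff)

lemma contDiff_κ : ContDiff ℝ (⊤:ℕ∞) (κ (n := n)) := by
  exact (Pc 0).contDiff.prodMk ((Qc 0).contDiff.prodMk contDiff_tt)

lemma Lκ_applyP (x : Phase n) (i : Fin n) :
    Lκ x (Pi.single i 1, 0) = if i = 0 then ((1:ℝ),(0:ℝ),(0:ℝ)) else
      (2 * x.1 i) • ((0:ℝ),(0:ℝ),(1:ℝ)) := by
  have hPc : ∀ j : Fin n, Pc j ((Pi.single i 1, 0) : Phase n) = (Pi.single i 1 : Fin n → ℝ) j := fun j => by rfl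
  have hQc : ∀ j : Fin n, Qc j ((Pi.single i 1, 0) : Phase n) = 0 := fun j => by rfl
  have htt : Ltt x ((Pi.single i 1, 0) : Phase n) = if i = 0 then 0 else 2 * x.1 i := by
    unfold Ltt
    rw [ContinuousLinearMap.sum_apply]
    have hterm : ∀ j ∈ Finset.univ.erase (0 : Fin n),
        ((x.1 j • Pc j + x.1 j • Pc j) + (x.2 j • Qc j + x.2 j • Qc j))
          ((Pi.single i 1, 0) : Phase n)
        = if j = i then 2 * x.1 i else 0 := by
      intro j _
      simp only [ContinuousLinearMap.add_apply, ContinuousLinearMap.smul_apply, hPc, hQc,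
        smul_eq_mul, mul_zero, add_zero]
      rw [Pi.single_apply]
      by_cases hji : j = i
      · subst hji; simp; ring
      · simp [hji]
    rw [Finset.sum_congr rfl hterm, Finset.sum_ite_eq' (Finset.univ.erase (0 : Fin n)) i
      (fun _ => 2 * x.1 i)]
    by_cases hi : i = 0
    · subst hi; simp
    · simp [Finset.mem_erase, hi]
  show (Pc 0 _, Qc 0 _, Ltt x _) = _
  rw [hPc, hQc, htt]
  by_cases hi : i = 0
  · subst hi; simp [Pi.single_eq_same]
  · simp [Pi.single_apply, hi, Ne.symm hi, Prod.ext_iff]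

lemma Lκ_applyQ (x : Phase n) (i : Fin n) :
    Lκ x (0, Pi.single i 1) = if i = 0 then ((0:ℝ),(1:ℝ),(0:ℝ)) else
      (2 * x.2 i) • ((0:ℝ),(0:ℝ),(1:ℝ)) := by
  have hPc : ∀ j : Fin n, Pc j ((0, Pi.single i 1) : Phase n) = 0 := fun j => by rfl
  have hQc : ∀ j : Fin n, Qc j ((0, Pi.single i 1) : Phase n) = (Pi.single i 1 : Fin n → ℝ) j := fun j => by rfl
  have htt : Ltt x ((0, Pi.single i 1) : Phase n) = if i = 0 then 0 else 2 * x.2 i := by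
    unfold Ltt
    rw [ContinuousLinearMap.sum_apply]
    have hterm : ∀ j ∈ Finset.univ.erase (0 : Fin n),
        ((x.1 j • Pc j + x.1 j • Pc j) + (x.2 j • Qc j + x.2 j • Qc j))
          ((0, Pi.single i 1) : Phase n)
        = if j = i then 2 * x.2 i else 0 := by
      intro j _
      simp only [ContinuousLinearMap.add_apply, ContinuousLinearMap.smul_apply, hPc, hQc,
        smul_eq_mul, mul_zero, zero_add]
      rw [Pi.single_apply]
      by_cases hji : j = i
      · subst hji; simp; ring
      · simp [hji]
    rw [Finset.sum_congr rfl hterm, Finset.sum_ite_eq' (Finset.univ.erase (0 : Fin n)) i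
      (fun _ => 2 * x.2 i)]
    by_cases hi : i = 0
    · subst hi; simp
    · simp [Finset.mem_erase, hi]
  show (Pc 0 _, Qc 0 _, Ltt x _) = _
  rw [hPc, hQc, htt]
  by_cases hi : i = 0
  · subst hi; simp [Pi.single_eq_same]
  · simp [Pi.single_apply, hi, Ne.symm hi, Prod.ext_iff]

lemma pderivP_comp (Θ : R3 → ℝ) (hΘ : ContDiff ℝ (⊤:ℕ∞) Θ) (x : Phase n) (i : Fin n) :
    pderivP (fun x => Θ (κ x)) i x
      = if i = 0 then Da Θ (κ x) else (2 * x.1 i) * Dw Θ (κ x) := by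
  unfold pderivP
  have hΘ' : HasFDerivAt Θ (fderiv ℝ Θ (κ x)) (κ x) :=
    (hΘ.differentiable (by simp) (κ x)).hasFDerivAt
  have hcomp : HasFDerivAt (fun x => Θ (κ x)) ((fderiv ℝ Θ (κ x)).comp (Lκ x)) x :=
    hΘ'.comp x (hasFDerivAt_κ x)
  rw [hcomp.fderiv, ContinuousLinearMap.comp_apply, Lκ_applyP]
  by_cases hi : i = 0
  · simp [hi, Da]
  · simp only [hi, if_false, map_smul, smul_eq_mul, Dw]

lemma pderivQ_comp (Θ : R3 → ℝ) (hΘ : ContDiff ℝ (⊤:ℕ∞) Θ) (x : Phase n) (i : Fin n) :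
    pderivQ (fun x => Θ (κ x)) i x
      = if i = 0 then Db Θ (κ x) else (2 * x.2 i) * Dw Θ (κ x) := by
  unfold pderivQ
  have hΘ' : HasFDerivAt Θ (fderiv ℝ Θ (κ x)) (κ x) :=
    (hΘ.differentiable (by simp) (κ x)).hasFDerivAt
  have hcomp : HasFDerivAt (fun x => Θ (κ x)) ((fderiv ℝ Θ (κ x)).comp (Lκ x)) x :=
    hΘ'.comp x (hasFDerivAt_κ x)
  rw [hcomp.fderiv, ContinuousLinearMap.comp_apply, Lκ_applyQ]
  by_cases hi : i = 0
  · simp [hi, Db]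
  · simp only [hi, if_false, map_smul, smul_eq_mul, Dw]

/-- The key reduction: Poisson brackets of pullbacks along `κ` are pullbacks of `bra`. -/
lemma poisson_comp (Θ Ξ : R3 → ℝ) (hΘ : ContDiff ℝ (⊤:ℕ∞) Θ) (hΞ : ContDiff ℝ (⊤:ℕ∞) Ξ)
    (x : Phase n) :
    poisson (fun x => Θ (κ x)) (fun x => Ξ (κ x)) x = bra Θ Ξ (κ x) := by
  unfold poisson
  have hterm : ∀ i : Fin n,
      pderivQ (fun x => Θ (κ x)) i x * pderivP (fun x => Ξ (κ x)) i x
        - pderivP (fun x => Θ (κ x)) i x * pderivQ (fun x => Ξ (κ x)) i x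
      = if i = 0 then bra Θ Ξ (κ x) else 0 := by
    intro i
    rw [pderivP_comp Θ hΘ, pderivQ_comp Θ hΘ, pderivP_comp Ξ hΞ, pderivQ_comp Ξ hΞ]
    by_cases hi : i = 0
    · simp only [hi, if_true]; rfl
    · simp only [hi, if_false]; ring
  rw [Finset.sum_congr rfl (fun i _ => hterm i), Finset.sum_ite_eq' Finset.univ (0 : Fin n)
    (fun _ => bra Θ Ξ (κ x))]
  simp

/-! ### Lipschitz estimates and the MVT point -/

lemma deriv_bβ_zero {t : ℝ} (h : t < 2 ∨ 8 < t) : deriv bβ t = 0 := by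
  rcases h with h | h
  · have hev : bβ =ᶠ[𝓝 t] fun _ => 0 :=
      Filter.eventually_of_mem (Iio_mem_nhds h) (fun u hu => bβ_eq_zero_left hu.le)
    rw [hev.deriv_eq]; exact deriv_const t 0
  · have hev : bβ =ᶠ[𝓝 t] fun _ => 0 :=
      Filter.eventually_of_mem (Ioi_mem_nhds h) (fun u hu => bβ_eq_zero_right hu.le)
    rw [hev.deriv_eq]; exact deriv_const t 0

lemma deriv_gγ_zero {t : ℝ} (h : t < 10 ∨ 12 < t) : deriv gγ t = 0 := by
  rcases h with h | h
  · have hev : gγ =ᶠ[𝓝 t] fun _ => 1 :=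
      Filter.eventually_of_mem (Iio_mem_nhds h) (fun u hu => gγ_eq_one hu.le)
    rw [hev.deriv_eq]; exact deriv_const t 1
  · have hev : gγ =ᶠ[𝓝 t] fun _ => 0 :=
      Filter.eventually_of_mem (Ioi_mem_nhds h) (fun u hu => gγ_eq_zero hu.le)
    rw [hev.deriv_eq]; exact deriv_const t 0

lemma lipschitz_of_deriv_bound (f : ℝ → ℝ) (hf : ContDiff ℝ (⊤:ℕ∞) f) {C : ℝ}
    (hC : ∀ t, |deriv f t| ≤ C) : ∀ u v : ℝ, |f u - f v| ≤ C * |u - v| := by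
  intro u v
  have hd : ∀ t ∈ (Set.univ : Set ℝ), DifferentiableAt ℝ f t :=
    fun t _ => hf.differentiable (by simp) t
  have := convex_univ.norm_image_sub_le_of_norm_deriv_le hd
    (fun t _ => by rw [Real.norm_eq_abs]; exact hC t) (Set.mem_univ v) (Set.mem_univ u)
  simpa [Real.norm_eq_abs] using this

lemma exists_lip (f : ℝ → ℝ) (hf : ContDiff ℝ (⊤:ℕ∞) f) (lo hi : ℝ) (hlo : lo < hi)
    (hflat : ∀ t, t < lo ∨ hi < t → deriv f t = 0) :
    ∃ C : ℝ, 0 ≤ C ∧ ∀ u v : ℝ, |f u - f v| ≤ C * |u - v| := by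
  have hcont : Continuous (deriv f) := hf.continuous_deriv (by exact_mod_cast le_top)
  obtain ⟨t₀, _, ht₀⟩ := isCompact_Icc.exists_isMaxOn (Set.nonempty_Icc.2 hlo.le)
    (hcont.abs.continuousOn)
  have ht₀ : ∀ t ∈ Set.Icc lo hi, |deriv f t| ≤ |deriv f t₀| := fun t ht => ht₀ ht
  refine ⟨|deriv f t₀|, abs_nonneg _, lipschitz_of_deriv_bound f hf (fun t => ?_)⟩
  rcases le_or_gt t lo with h1 | h1
  · rcases lt_or_ge t lo with h1' | h1'
    · rw [hflat t (Or.inl h1')]; simp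
    · exact ht₀ t ⟨h1', by linarith⟩
  · rcases le_or_gt t hi with h2 | h2
    · exact ht₀ t ⟨by linarith, h2⟩
    · rw [hflat t (Or.inr h2)]; simp

lemma exists_deriv_bβ : ∃ s₀ : ℝ, 2 < s₀ ∧ s₀ < 3 ∧ deriv bβ s₀ = 1 := by
  have hcont : ContinuousOn bβ (Set.Icc 2 3) := contDiff_bβ.continuous.continuousOn
  have hder : ∀ t ∈ Set.Ioo (2:ℝ) 3, HasDerivAt bβ (deriv bβ t) t := fun t _ => hasDerivAt_bβ t
  obtain ⟨c, hc, heq⟩ := exists_hasDerivAt_eq_slope bβ (deriv bβ) (by norm_num) hcont hder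
  refine ⟨c, hc.1, hc.2, ?_⟩
  rw [heq]
  have h3 : bβ 3 = 1 := by
    unfold bβ
    rw [Real.smoothTransition.one_of_one_le (by norm_num : (1:ℝ) ≤ 3 - 2),
      Real.smoothTransition.one_of_one_le (by norm_num : (1:ℝ) ≤ 8 - 3)]
    norm_num
  have h2 : bβ 2 = 0 := bβ_eq_zero_left le_rfl
  rw [h2, h3]
  norm_num

/-! ### Closeness estimates on `ℝ³` -/

lemma close_F (K : ℕ) (hK : 1 ≤ K) {C : ℝ} (hC0 : 0 ≤ C)
    (hC : ∀ u v : ℝ, |bβ u - bβ v| ≤ C * |u - v|) (y : R3) :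
    |ΘF' K y - ΘF y| ≤ C * (K:ℝ)⁻¹ := by
  have hKi : (0:ℝ) ≤ (K:ℝ)⁻¹ := by positivity
  have hstep : |bβ (τ K (s3 y)) - bβ (s3 y)| ≤ C * (K:ℝ)⁻¹ := by
    rcases le_or_gt (s3 y) 1 with hs | hs
    · rw [τ_eq_left K hs, bβ_eq_zero_left (by norm_num : (1:ℝ) ≤ 2),
        bβ_eq_zero_left (by linarith)]
      simpa using mul_nonneg hC0 hKi
    rcases le_or_gt 10 (s3 y) with hs2 | hs2
    · rw [τ_eq_right K hK hs2, bβ_eq_zero_right (by norm_num : (8:ℝ) ≤ 10),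
        bβ_eq_zero_right (by linarith)]
      simpa using mul_nonneg hC0 hKi
    · calc |bβ (τ K (s3 y)) - bβ (s3 y)| ≤ C * |τ K (s3 y) - s3 y| := hC _ _
        _ ≤ C * (K:ℝ)⁻¹ := mul_le_mul_of_nonneg_left (τ_close K hK hs.le hs2.le) hC0
  have hccb : |cc y.2.2| ≤ 1 := by
    rw [abs_of_nonneg (cc_nonneg _)]; exact cc_le_one _
  have : ΘF' K y - ΘF y = (bβ (τ K (s3 y)) - bβ (s3 y)) * cc y.2.2 := by
    unfold ΘF' ΘF; ring
  rw [this, abs_mul]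
  calc |bβ (τ K (s3 y)) - bβ (s3 y)| * |cc y.2.2|
      ≤ (C * (K:ℝ)⁻¹) * 1 := mul_le_mul hstep hccb (abs_nonneg _) (by positivity)
    _ = C * (K:ℝ)⁻¹ := mul_one _

lemma close_G_gen (K : ℕ) (hK : 1 ≤ K) {C : ℝ} (hC0 : 0 ≤ C)
    (hC : ∀ u v : ℝ, |gγ u - gγ v| ≤ C * |u - v|) (y : R3) (a2 : ℝ)
    (ha2 : 0 ≤ a2) (ha2s : a2 ≤ s3 y) (w : ℝ) :
    |(eta K (s3 y) * a2 / 2) * gγ (lam K (s3 y)) * cc w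
      - (a2/2) * gγ (s3 y) * cc w| ≤ (1/2 + 7*C) * (K:ℝ)⁻¹ := by
  set s := s3 y with hs
  have hs0 : 0 ≤ s := s3_nonneg y
  have hKi : (0:ℝ) ≤ (K:ℝ)⁻¹ := by positivity
  have hlam := lam_close K hK s
  have hccb : |cc w| ≤ 1 := by rw [abs_of_nonneg (cc_nonneg _)]; exact cc_le_one _
  have hggb : ∀ t, |gγ t| ≤ 1 := fun t => by
    rw [abs_of_nonneg (gγ_nonneg _)]; exact gγ_le_one _
  -- T1 : |eta - 1| * a2 ≤ |lam - s|
  have hT1 : |eta K s - 1| * a2 ≤ |lam K s - s| := by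
    rcases eq_or_lt_of_le hs0 with hs0' | hs0'
    · have : a2 = 0 := le_antisymm (by rw [← hs0'] at ha2s; exact ha2s) ha2
      rw [this, mul_zero]
      exact abs_nonneg _
    · have hmul : (eta K s - 1) * s = lam K s - s := by
        have := eta_mul_self K s
        nlinarith [this]
      calc |eta K s - 1| * a2 ≤ |eta K s - 1| * s :=
            mul_le_mul_of_nonneg_left ha2s (abs_nonneg _)
        _ = |(eta K s - 1) * s| := by rw [abs_mul, abs_of_pos hs0']
        _ = |lam K s - s| := by rw [hmul]
  -- T2 : a2 * |gγ (lam s) - gγ s| ≤ 14 * C * |lam - s|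
  have hT2 : a2 * |gγ (lam K s) - gγ (s)| ≤ 14 * (C * (K:ℝ)⁻¹) := by
    rcases le_or_gt s 14 with hs14 | hs14
    · calc a2 * |gγ (lam K s) - gγ s| ≤ 14 * (C * |lam K s - s|) := by
            have h1 := hC (lam K s) s
            have h2 : a2 ≤ 14 := le_trans ha2s hs14
            nlinarith [abs_nonneg (gγ (lam K s) - gγ s), mul_le_mul_of_nonneg_right h2
              (abs_nonneg (gγ (lam K s) - gγ s))]
        _ ≤ 14 * (C * (K:ℝ)⁻¹) := by
            have := mul_le_mul_of_nonneg_left hlam hC0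
            nlinarith
    · rw [lam_eq_right K (by linarith)]
      simp only [sub_self, abs_zero, mul_zero]
      positivity
  -- assemble
  have hdecomp : (eta K s * a2 / 2) * gγ (lam K s) * cc w - (a2/2) * gγ (s) * cc w
      = ((eta K s - 1) * a2 / 2) * gγ (lam K s) * cc w
        + (a2/2) * (gγ (lam K s) - gγ s) * cc w := by ring
  rw [hdecomp]
  have hb1 : |((eta K s - 1) * a2 / 2) * gγ (lam K s) * cc w| ≤ (K:ℝ)⁻¹ / 2 := by
    rw [abs_mul, abs_mul]
    have h1 : |(eta K s - 1) * a2 / 2| ≤ |lam K s - s| / 2 := by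
      rw [abs_div, abs_mul, abs_of_nonneg ha2]
      have : |(2:ℝ)| = 2 := by norm_num
      rw [this]
      linarith [hT1]
    calc |(eta K s - 1) * a2 / 2| * |gγ (lam K s)| * |cc w|
        ≤ (|lam K s - s| / 2) * 1 * 1 := by
          refine mul_le_mul (mul_le_mul h1 (hggb _) (abs_nonneg _) (by positivity))
            hccb (abs_nonneg _) (by positivity)
      _ = |lam K s - s| / 2 := by ring
      _ ≤ (K:ℝ)⁻¹ / 2 := by linarith
  have hb2 : |(a2/2) * (gγ (lam K s) - gγ s) * cc w| ≤ 7 * (C * (K:ℝ)⁻¹) := by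
    rw [abs_mul, abs_mul, abs_div]
    have h2 : |(2:ℝ)| = 2 := by norm_num
    rw [h2, abs_of_nonneg ha2]
    calc a2 / 2 * |gγ (lam K s) - gγ s| * |cc w| ≤ a2 / 2 * |gγ (lam K s) - gγ s| * 1 := by
          refine mul_le_mul_of_nonneg_left hccb (by positivity)
      _ = (a2 * |gγ (lam K s) - gγ s|) / 2 := by ring
      _ ≤ (14 * (C * (K:ℝ)⁻¹)) / 2 := by linarith
      _ = 7 * (C * (K:ℝ)⁻¹) := by ring
  calc |((eta K s - 1) * a2 / 2) * gγ (lam K s) * cc w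
        + (a2/2) * (gγ (lam K s) - gγ s) * cc w|
      ≤ |((eta K s - 1) * a2 / 2) * gγ (lam K s) * cc w|
        + |(a2/2) * (gγ (lam K s) - gγ s) * cc w| := abs_add_le _ _
    _ ≤ (K:ℝ)⁻¹ / 2 + 7 * (C * (K:ℝ)⁻¹) := add_le_add hb1 hb2
    _ = (1/2 + 7*C) * (K:ℝ)⁻¹ := by ring

/-! ### Compact support -/

lemma vanish_ΘF : ∀ y : R3, (15 ≤ s3 y ∨ 2 ≤ y.2.2) → ΘF y = 0 := by
  intro y h
  unfold ΘF
  rcases h with h | h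
  · rw [bβ_eq_zero_right (by linarith), zero_mul]
  · rw [cc_eq_zero h, mul_zero]

lemma vanish_ΘG : ∀ y : R3, (15 ≤ s3 y ∨ 2 ≤ y.2.2) → ΘG y = 0 := by
  intro y h
  unfold ΘG
  rcases h with h | h
  · rw [gγ_eq_zero (by linarith), mul_zero, zero_mul]
  · rw [cc_eq_zero h, mul_zero]

lemma vanish_ΘH : ∀ y : R3, (15 ≤ s3 y ∨ 2 ≤ y.2.2) → ΘH y = 0 := by
  intro y h
  unfold ΘH
  rcases h with h | h
  · rw [gγ_eq_zero (by linarith), mul_zero, zero_mul]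
  · rw [cc_eq_zero h, mul_zero]

lemma vanish_ΘF' (K : ℕ) (hK : 1 ≤ K) : ∀ y : R3, (15 ≤ s3 y ∨ 2 ≤ y.2.2) → ΘF' K y = 0 := by
  intro y h
  unfold ΘF'
  rcases h with h | h
  · rw [τ_eq_right K hK (by linarith), bβ_eq_zero_right (by norm_num), zero_mul]
  · rw [cc_eq_zero h, mul_zero]

lemma vanish_ΘG' (K : ℕ) : ∀ y : R3, (15 ≤ s3 y ∨ 2 ≤ y.2.2) → ΘG' K y = 0 := by
  intro y h
  unfold ΘG'
  rcases h with h | h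
  · rw [lam_eq_right K (by linarith), gγ_eq_zero (by linarith), mul_zero, zero_mul]
  · rw [cc_eq_zero h, mul_zero]

lemma vanish_ΘH' (K : ℕ) : ∀ y : R3, (15 ≤ s3 y ∨ 2 ≤ y.2.2) → ΘH' K y = 0 := by
  intro y h
  unfold ΘH'
  rcases h with h | h
  · rw [lam_eq_right K (by linarith), gγ_eq_zero (by linarith), mul_zero, zero_mul]
  · rw [cc_eq_zero h, mul_zero]

lemma hasCompactSupport_comp (Θ : R3 → ℝ)
    (h : ∀ y : R3, (15 ≤ s3 y ∨ 2 ≤ y.2.2) → Θ y = 0) :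
    HasCompactSupport (fun x : Phase n => Θ (κ x)) := by
  refine HasCompactSupport.intro (K := Metric.closedBall 0 5) (isCompact_closedBall 0 5) ?_
  intro x hx
  rw [Metric.mem_closedBall, dist_zero_right] at hx
  push_neg at hx
  have hx' : (5:ℝ) < max ‖x.1‖ ‖x.2‖ := hx
  have hcoord : (∃ i, 5 < |x.1 i|) ∨ (∃ i, 5 < |x.2 i|) := by
    rcases lt_max_iff.1 hx' with h1 | h1
    · left
      by_contra hcon
      push_neg at hcon
      have : ‖x.1‖ ≤ 5 := pi_norm_le_iff_of_nonneg (by norm_num) |>.2 (fun i => by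
        rw [Real.norm_eq_abs]; exact hcon i)
      linarith
    · right
      by_contra hcon
      push_neg at hcon
      have : ‖x.2‖ ≤ 5 := pi_norm_le_iff_of_nonneg (by norm_num) |>.2 (fun i => by
        rw [Real.norm_eq_abs]; exact hcon i)
      linarith
  have hbig : 15 ≤ s3 (κ x) ∨ 2 ≤ (κ x).2.2 := by
    have hsq : ∀ c : ℝ, 5 < |c| → 25 ≤ c * c := by
      intro c hc
      nlinarith [abs_nonneg c, sq_abs c]
    rcases hcoord with ⟨i, hi⟩ | ⟨i, hi⟩
    · by_cases hi0 : i = 0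
      · left
        subst hi0
        have : s3 (κ x) = x.1 0 * x.1 0 + x.2 0 * x.2 0 := rfl
        rw [this]
        nlinarith [hsq _ hi, mul_self_nonneg (x.2 0)]
      · right
        have hterm : x.1 i * x.1 i + x.2 i * x.2 i ≤ tt x := by
          refine Finset.single_le_sum (f := fun j => x.1 j * x.1 j + x.2 j * x.2 j) ?_ ?_
          · intro j _
            show (0:ℝ) ≤ x.1 j * x.1 j + x.2 j * x.2 j
            nlinarith [mul_self_nonneg (x.1 j), mul_self_nonneg (x.2 j)]
          · simp [Finset.mem_erase, hi0]
        have : (κ x).2.2 = tt x := rfl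
        rw [this]
        nlinarith [hsq _ hi, mul_self_nonneg (x.2 i)]
    · by_cases hi0 : i = 0
      · left
        subst hi0
        have : s3 (κ x) = x.1 0 * x.1 0 + x.2 0 * x.2 0 := rfl
        rw [this]
        nlinarith [hsq _ hi, mul_self_nonneg (x.1 0)]
      · right
        have hterm : x.1 i * x.1 i + x.2 i * x.2 i ≤ tt x := by
          refine Finset.single_le_sum (f := fun j => x.1 j * x.1 j + x.2 j * x.2 j) ?_ ?_
          · intro j _
            show (0:ℝ) ≤ x.1 j * x.1 j + x.2 j * x.2 j
            nlinarith [mul_self_nonneg (x.1 j), mul_self_nonneg (x.2 j)]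
          · simp [Finset.mem_erase, hi0]
        have : (κ x).2.2 = tt x := rfl
        rw [this]
        nlinarith [hsq _ hi, mul_self_nonneg (x.1 i)]
  exact h (κ x) hbig

lemma unif_lt {f : Phase n → ℝ} {B ε : ℝ} (h : ∀ x, |f x| ≤ B) (hB : B < ε) : unif f < ε :=
  lt_of_le_of_lt (ciSup_le h) hB

end TBNR

open TBNR

/-- **Non-rigidity of the triple bracket.** For every `n ≥ 1` there exist
`F, G, H ∈ C_c^∞(ℝ^{2n})` with `{F, {G, H}} ≢ 0` which admit arbitrarily uniformly-close
smooth compactly supported perturbations `F', G', H'` with `{F', {G', H'}} ≡ 0`. -/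
theorem triple_bracket_not_rigid (n : ℕ) (hn : 1 ≤ n) :
    ∃ F G H : Phase n → ℝ,
      SmoothCpt F ∧ SmoothCpt G ∧ SmoothCpt H ∧
      (¬ ∀ x, poisson F (poisson G H) x = 0) ∧
      ∀ ε > (0 : ℝ), ∃ F' G' H' : Phase n → ℝ,
        SmoothCpt F' ∧ SmoothCpt G' ∧ SmoothCpt H' ∧
        unif (fun x => F' x - F x) < ε ∧
        unif (fun x => G' x - G x) < ε ∧
        unif (fun x => H' x - H x) < ε ∧
        ∀ x, poisson F' (poisson G' H') x = 0 := by
  haveI : NeZero n := ⟨by omega⟩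
  obtain ⟨s₀, hs₀1, hs₀2, hds₀⟩ := exists_deriv_bβ
  set u₀ := Real.sqrt s₀ with hu₀
  have hu : u₀ * u₀ = s₀ := Real.mul_self_sqrt (by linarith)
  refine ⟨fun x => ΘF (κ x), fun x => ΘG (κ x), fun x => ΘH (κ x),
    ⟨by exact contDiff_ΘF.comp contDiff_κ, hasCompactSupport_comp _ vanish_ΘF⟩,
    ⟨by exact contDiff_ΘG.comp contDiff_κ, hasCompactSupport_comp _ vanish_ΘG⟩,
    ⟨by exact contDiff_ΘH.comp contDiff_κ, hasCompactSupport_comp _ vanish_ΘH⟩,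
    ?_, ?_⟩
  · -- nonvanishing at x₀
    intro hall
    set x₀ : Phase n := (fun i => if i = 0 then u₀ else 0, fun _ => 0) with hx₀
    have hκx₀ : κ x₀ = ((u₀ : ℝ), (0:ℝ), (0:ℝ)) := by
      have h3 : tt x₀ = 0 := by
        unfold tt
        refine Finset.sum_eq_zero (fun j hj => ?_)
        have hj0 : j ≠ 0 := (Finset.mem_erase.1 hj).1
        have : x₀.1 j = 0 := by simp [hx₀, hj0]
        rw [this]
        have : x₀.2 j = 0 := rfl
        rw [this]
        ring
      have h1 : x₀.1 0 = u₀ := by simp [hx₀]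
      have h2 : x₀.2 0 = 0 := rfl
      show (x₀.1 0, x₀.2 0, tt x₀) = _
      rw [h1, h2, h3]
    have hP : poisson (fun x => ΘG (κ x)) (fun x => ΘH (κ x))
        = fun x : Phase n => bra ΘG ΘH (κ x) :=
      funext (fun x => poisson_comp _ _ contDiff_ΘG contDiff_ΘH x)
    have hval := hall x₀
    rw [hP, poisson_comp _ _ contDiff_ΘF (contDiff_bra contDiff_ΘG contDiff_ΘH) x₀,
      hκx₀, bra_center hs₀1 hs₀2 hu, hds₀] at hval
    nlinarith [hval]
  · -- the perturbations
    intro ε hε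
    obtain ⟨Cβ, hCβ0, hCβ⟩ := exists_lip bβ contDiff_bβ 2 8 (by norm_num)
      (fun t ht => deriv_bβ_zero ht)
    obtain ⟨Cγ, hCγ0, hCγ⟩ := exists_lip gγ contDiff_gγ 10 12 (by norm_num)
      (fun t ht => deriv_gγ_zero ht)
    set D : ℝ := max Cβ (1/2 + 7*Cγ) with hD
    have hD0 : 0 ≤ D := le_trans hCβ0 (le_max_left _ _)
    obtain ⟨K, hKgt⟩ := exists_nat_gt (max 20 ((D+1)/ε))
    have hKpos : (0:ℝ) < K := lt_of_le_of_lt (le_trans (by norm_num) (le_max_left 20 ((D+1)/ε)))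
      hKgt
    have hK20 : 20 ≤ K := by
      have : (20:ℝ) < K := lt_of_le_of_lt (le_max_left _ _) hKgt
      exact_mod_cast this.le
    have hK1 : 1 ≤ K := by omega
    have hbound : (D+1) * (K:ℝ)⁻¹ < ε := by
      have h1 : (D+1)/ε < K := lt_of_le_of_lt (le_max_right _ _) hKgt
      rw [div_lt_iff₀ hε] at h1
      rw [mul_inv_lt_iff₀ hKpos]
      linarith [mul_comm ε (K:ℝ)]
    refine ⟨fun x => ΘF' K (κ x), fun x => ΘG' K (κ x), fun x => ΘH' K (κ x),
      ⟨by exact (contDiff_ΘF' K).comp contDiff_κ,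
        hasCompactSupport_comp _ (vanish_ΘF' K hK1)⟩,
      ⟨by exact (contDiff_ΘG' K).comp contDiff_κ, hasCompactSupport_comp _ (vanish_ΘG' K)⟩,
      ⟨by exact (contDiff_ΘH' K).comp contDiff_κ, hasCompactSupport_comp _ (vanish_ΘH' K)⟩,
      ?_, ?_, ?_, ?_⟩
    · refine unif_lt (B := (D+1) * (K:ℝ)⁻¹) (fun x => ?_) hbound
      have h1 := close_F K hK1 hCβ0 hCβ (κ x)
      have h2 : Cβ ≤ D + 1 := le_trans (le_max_left _ _) (by linarith)
      have h3 : Cβ * (K:ℝ)⁻¹ ≤ (D+1) * (K:ℝ)⁻¹ :=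
        mul_le_mul_of_nonneg_right h2 (by positivity)
      exact le_trans h1 h3
    · refine unif_lt (B := (D+1) * (K:ℝ)⁻¹) (fun x => ?_) hbound
      have ha2s : (κ x).1 * (κ x).1 ≤ s3 (κ x) := by
        have : s3 (κ x) = (κ x).1 * (κ x).1 + (κ x).2.1 * (κ x).2.1 := rfl
        nlinarith [mul_self_nonneg ((κ x).2.1)]
      have h1 := close_G_gen K hK1 hCγ0 hCγ (κ x) ((κ x).1 * (κ x).1)
        (mul_self_nonneg _) ha2s ((κ x).2.2)
      have h2 : (1/2 + 7*Cγ) ≤ D + 1 := le_trans (le_max_right _ _) (by linarith)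
      have h3 : (1/2 + 7*Cγ) * (K:ℝ)⁻¹ ≤ (D+1) * (K:ℝ)⁻¹ :=
        mul_le_mul_of_nonneg_right h2 (by positivity)
      exact le_trans h1 h3
    · refine unif_lt (B := (D+1) * (K:ℝ)⁻¹) (fun x => ?_) hbound
      have ha2s : (κ x).2.1 * (κ x).2.1 ≤ s3 (κ x) := by
        have : s3 (κ x) = (κ x).1 * (κ x).1 + (κ x).2.1 * (κ x).2.1 := rfl
        nlinarith [mul_self_nonneg ((κ x).1)]
      have h1 := close_G_gen K hK1 hCγ0 hCγ (κ x) ((κ x).2.1 * (κ x).2.1)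
        (mul_self_nonneg _) ha2s ((κ x).2.2)
      have h2 : (1/2 + 7*Cγ) ≤ D + 1 := le_trans (le_max_right _ _) (by linarith)
      have h3 : (1/2 + 7*Cγ) * (K:ℝ)⁻¹ ≤ (D+1) * (K:ℝ)⁻¹ :=
        mul_le_mul_of_nonneg_right h2 (by positivity)
      exact le_trans h1 h3
    · intro x
      have hP : poisson (fun x => ΘG' K (κ x)) (fun x => ΘH' K (κ x))
          = fun x : Phase n => bra (ΘG' K) (ΘH' K) (κ x) :=
        funext (fun x => poisson_comp _ _ (contDiff_ΘG' K) (contDiff_ΘH' K) x)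
      rw [hP, poisson_comp _ _ (contDiff_ΘF' K)
        (contDiff_bra (contDiff_ΘG' K) (contDiff_ΘH' K)) x]
      exact bra_perturbed K hK20 (κ x)
end
end

section
/- Let H, K ∈ C_c^∞(ℝ^{2n}) with Hamiltonian flows (ψ_H^t) and (ψ_K^t), write ψ_K := ψ_K^1, and define L(x,t) = H(x) − H(ψ_K^{−1}(ψ_H^{−t}(x))). Then ∫_0^1 ( sup_{x∈ℝ^{2n}} L(x,t) ) dt ≤ max_{x∈ℝ^{2n}} {H, K}(x). -/
/-- The Hamiltonian vector field `X_H = (−∂H/∂q, ∂H/∂p)`. -/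
noncomputable def hamVF {n : ℕ} (H : Phase n → ℝ) (x : Phase n) : Phase n :=
  (fun i => -(pderivQ H i x), fun i => pderivP H i x)

/-- `ψ` is the Hamiltonian flow of `H`: `ψ^0 = id`, the group (flow) law holds, and
`(d/dt) ψ^t x = X_H (ψ^t x)`. -/
def IsHamFlow {n : ℕ} (H : Phase n → ℝ) (ψ : ℝ → Phase n → Phase n) : Prop :=
  (∀ x, ψ 0 x = x) ∧ (∀ s t x, ψ (s + t) x = ψ s (ψ t x)) ∧
  (∀ x t, HasDerivAt (fun s => ψ s x) (hamVF H (ψ t x)) t)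

lemma clm_pair_apply {n : ℕ} (L : Phase n →L[ℝ] ℝ) (a b : Fin n → ℝ) :
    L (a, b) = ∑ i, a i * L (Pi.single i 1, (0 : Fin n → ℝ))
      + ∑ i, b i * L ((0 : Fin n → ℝ), Pi.single i 1) := by
  have ha : (a, b) = (∑ i, a i • ((Pi.single i 1 : Fin n → ℝ), (0 : Fin n → ℝ)))
      + ∑ i, b i • ((0 : Fin n → ℝ), (Pi.single i 1 : Fin n → ℝ)) := by
    rw [Prod.ext_iff]
    constructor <;>
    · simp only [Prod.fst_sum, Prod.snd_sum, Prod.fst_add, Prod.snd_add, Prod.smul_mk,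
        smul_zero, Finset.sum_const_zero, add_zero, zero_add]
      funext j
      simp [Finset.sum_apply, Pi.single_apply, mul_comm]
  rw [ha, map_add, map_sum, map_sum]
  congr 1 <;> refine Finset.sum_congr rfl fun i _ => ?_ <;> rw [map_smul, smul_eq_mul]

/-- Derivative of `H` along the flow of `K` is the Poisson bracket. -/
lemma hasDerivAt_comp_flow {n : ℕ} (H K : Phase n → ℝ) (hH : Differentiable ℝ H)
    (ψ : ℝ → Phase n → Phase n) (hψ : IsHamFlow K ψ) (x : Phase n) (t : ℝ) :
    HasDerivAt (fun s => H (ψ s x)) (poisson H K (ψ t x)) t := by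
  have h1 := (hH (ψ t x)).hasFDerivAt.comp_hasDerivAt t (hψ.2.2 x t)
  convert h1 using 1
  · rfl
  · rfl
  · rfl
  rw [hamVF, clm_pair_apply]
  simp only [poisson, pderivP, pderivQ]
  rw [← Finset.sum_add_distrib]
  exact Finset.sum_congr rfl fun i _ => by ring

lemma H_const_along_flow {n : ℕ} (H : Phase n → ℝ) (hH : Differentiable ℝ H)
    (ψ : ℝ → Phase n → Phase n) (hψ : IsHamFlow H ψ) (t : ℝ) (x : Phase n) :
    H (ψ t x) = H x := by
  have hd : ∀ s, HasDerivAt (fun s => H (ψ s x)) 0 s := by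
    intro s
    have h := hasDerivAt_comp_flow H H hH ψ hψ x s
    have h0 : poisson H H (ψ s x) = 0 := by
      simp [poisson, mul_comm]
    rwa [h0] at h
  have := is_const_of_deriv_eq_zero (f := fun s => H (ψ s x))
    (fun s => (hd s).differentiableAt) (fun s => (hd s).deriv) t 0
  simpa [hψ.1 x] using this

lemma poisson_bddAbove {n : ℕ} (H K : Phase n → ℝ) (hH : SmoothCpt H) (hK : SmoothCpt K) :
    BddAbove (Set.range (poisson H K)) := by
  have hfd : ∀ (F : Phase n → ℝ), ContDiff ℝ (⊤ : ℕ∞) F → ∀ v : Phase n,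
      Continuous (fun x => fderiv ℝ F x v) := fun F hF v =>
    (hF.continuous_fderiv (by simp)).clm_apply continuous_const
  have hc : Continuous (poisson H K) := by
    unfold poisson pderivP pderivQ
    refine continuous_finset_sum _ fun i _ => Continuous.sub ?_ ?_ <;>
      exact Continuous.mul (hfd H hH.1 _) (hfd K hK.1 _)
  have hsupp : HasCompactSupport (poisson H K) := by
    refine (hH.2.fderiv ℝ).mono fun x hx => ?_
    intro hfx
    apply hx
    simp [poisson, pderivP, pderivQ, hfx]
  exact hc.bddAbove_range_of_hasCompactSupport hsupp

/-- With `L(x,t) = H(x) − H(ψ_K^{−1}(ψ_H^{−t}(x)))`, one has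
`∫_0^1 sup_x L(x,t) dt ≤ max {H, K}`. -/
theorem integral_sup_commutator_le_max_poisson (n : ℕ) (H K : Phase n → ℝ)
    (hH : SmoothCpt H) (hK : SmoothCpt K)
    (ψH ψK : ℝ → Phase n → Phase n)
    (hψH : IsHamFlow H ψH) (hψK : IsHamFlow K ψK) :
    (∫ t in (0 : ℝ)..1, ⨆ x, (H x - H (ψK (-1) (ψH (-t) x))))
      ≤ ⨆ x, poisson H K x := by
  have hHd : Differentiable ℝ H := hH.1.differentiable (by simp)
  have hbdd := poisson_bddAbove H K hH hK
  -- Step 1: each value H y - H (ψK (-1) y) is ≤ the sup of the Poisson bracket.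
  have key : ∀ y : Phase n, H y - H (ψK (-1) y) ≤ ⨆ x, poisson H K x := by
    intro y
    have hder : ∀ s : ℝ, HasDerivAt (fun s => H (ψK s y)) (poisson H K (ψK s y)) s :=
      fun s => hasDerivAt_comp_flow H K hHd ψK hψK y s
    obtain ⟨c, _, hc⟩ := exists_hasDerivAt_eq_slope (fun s => H (ψK s y))
      (fun s => poisson H K (ψK s y)) (by norm_num : (-1 : ℝ) < 0)
      (fun s _ => (hder s).continuousAt.continuousWithinAt)
      (fun s _ => hder s)
    have h1 : poisson H K (ψK c y) = H (ψK 0 y) - H (ψK (-1) y) := by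
      rw [hc]; norm_num
    rw [hψK.1 y] at h1
    calc H y - H (ψK (-1) y) = poisson H K (ψK c y) := h1.symm
      _ ≤ ⨆ x, poisson H K x := le_ciSup hbdd _
  -- Step 2: the sup over x is independent of t.
  have hS : ∀ t : ℝ, (⨆ x, (H x - H (ψK (-1) (ψH (-t) x))))
      = ⨆ y, (H y - H (ψK (-1) y)) := by
    intro t
    have hsurj : Function.Surjective (ψH (-t)) := by
      intro y
      refine ⟨ψH t y, ?_⟩
      rw [← hψH.2.1]
      simp [hψH.1]
    have h1 : (fun x => H x - H (ψK (-1) (ψH (-t) x)))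
        = (fun y => H y - H (ψK (-1) y)) ∘ (ψH (-t)) := by
      funext x
      simp only [Function.comp_apply]
      rw [H_const_along_flow H hHd ψH hψH (-t) x]
    rw [iSup, iSup, h1, Set.range_comp, hsurj.range_eq, Set.image_univ]
  simp only [hS]
  rw [intervalIntegral.integral_const]
  simpa using ciSup_le key
end

section
/- Let F, G ∈ C_c^∞(ℝ^{2n}) with Hamiltonian flows (f_s)_{s∈ℝ} and (g_t)_{t∈ℝ}, and for s,t ∈ ℝ, τ ∈ [0,1], x ∈ ℝ^{2n} set L_{s,t}(x,τ) := s·F(x) − s·F(g_t^{−1}(f_{τs}^{−1}(x))). Then for every fixed x ∈ ℝ^{2n} and τ ∈ [0,1], the function (s,t) ↦ L_{s,t}(x,τ) vanishes identically on the lines s = 0 and t = 0, and its mixed second partial derivative at (s,t) = (0,0) equals {F, G}(x): ∂²/∂s∂t |_{(0,0)} L_{s,t}(x,τ) = {F, G}(x). -/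
-- Lemma A: expansion of a CLM on Phase n
lemma clm_expand {n : ℕ} (L : Phase n →L[ℝ] ℝ) (v : Phase n) :
    L v = ∑ i, v.1 i * L (Pi.single i 1, 0) + ∑ i, v.2 i * L (0, Pi.single i 1) := by
  have hv : v = (∑ i, v.1 i • ((Pi.single i 1 : Fin n → ℝ), (0 : Fin n → ℝ)))
      + ∑ i, v.2 i • (((0 : Fin n → ℝ)), (Pi.single i 1 : Fin n → ℝ)) := by
    apply Prod.ext <;>
      simp [Prod.fst_sum, Prod.snd_sum, ← Pi.single_smul, Finset.univ_sum_single]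
  calc L v = L ((∑ i, v.1 i • ((Pi.single i 1 : Fin n → ℝ), (0 : Fin n → ℝ)))
      + ∑ i, v.2 i • (((0 : Fin n → ℝ)), (Pi.single i 1 : Fin n → ℝ))) := by rw [← hv]
    _ = _ := by
      rw [map_add, map_sum, map_sum]
      simp only [map_smul, smul_eq_mul]

-- Lemma B
lemma fderiv_hamVF {n : ℕ} (F G : Phase n → ℝ) (y : Phase n) :
    fderiv ℝ F y (hamVF G y) = poisson F G y := by
  rw [clm_expand]
  unfold hamVF poisson pderivP pderivQ
  rw [← Finset.sum_add_distrib]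
  exact Finset.sum_congr rfl fun i _ => by ring

-- derivative of t ↦ ψ(-t) y
lemma flow_neg_deriv {n : ℕ} {H : Phase n → ℝ} {ψ : ℝ → Phase n → Phase n}
    (hψ : IsHamFlow H ψ) (y : Phase n) (t : ℝ) :
    HasDerivAt (fun t => ψ (-t) y) (-(hamVF H (ψ (-t) y))) t := by
  have h1 := hψ.2.2 y (-t)
  have h2 : HasDerivAt (fun t : ℝ => -t) (-1) t := (hasDerivAt_id t).neg
  simpa [Function.comp_def] using h1.scomp t h2

-- derivative of t ↦ F (ψ(-t) y)
lemma comp_flow_neg_deriv {n : ℕ} {F H : Phase n → ℝ} {ψ : ℝ → Phase n → Phase n}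
    (hFd : Differentiable ℝ F) (hψ : IsHamFlow H ψ) (y : Phase n) (t : ℝ) :
    HasDerivAt (fun t => F (ψ (-t) y)) (-(poisson F H (ψ (-t) y))) t := by
  have := (hFd (ψ (-t) y)).hasFDerivAt.comp_hasDerivAt t (flow_neg_deriv hψ y t)
  simpa [map_neg, fderiv_hamVF, Function.comp_def] using this

-- F is constant along its own flow
lemma flow_invariant {n : ℕ} {F : Phase n → ℝ} {ψ : ℝ → Phase n → Phase n}
    (hFd : Differentiable ℝ F) (hψ : IsHamFlow F ψ) (x : Phase n) (u : ℝ) :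
    F (ψ u x) = F x := by
  have hzero : ∀ y, poisson F F y = 0 := by
    intro y; unfold poisson; exact Finset.sum_eq_zero fun i _ => by ring
  have hd : ∀ t, HasDerivAt (fun u => F (ψ u x)) 0 t := by
    intro t
    have := (hFd (ψ t x)).hasFDerivAt.comp_hasDerivAt t (hψ.2.2 x t)
    simpa [fderiv_hamVF, hzero, Function.comp_def] using this
  have := is_const_of_deriv_eq_zero (f := fun u => F (ψ u x))
    (fun t => (hd t).differentiableAt) (fun t => (hd t).deriv) u 0
  simpa [hψ.1] using this

lemma poisson_continuous {n : ℕ} {F G : Phase n → ℝ}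
    (hF : ContDiff ℝ (⊤ : ℕ∞) F) (hG : ContDiff ℝ (⊤ : ℕ∞) G) :
    Continuous (poisson F G) := by
  have hFc : Continuous (fderiv ℝ F) := hF.continuous_fderiv (by simp)
  have hGc : Continuous (fderiv ℝ G) := hG.continuous_fderiv (by simp)
  unfold poisson pderivP pderivQ
  exact continuous_finset_sum _ fun i _ =>
    ((hFc.clm_apply continuous_const).mul (hGc.clm_apply continuous_const)).sub
      ((hFc.clm_apply continuous_const).mul (hGc.clm_apply continuous_const))


/-- With `L_{s,t}(x,τ) = s·F(x) − s·F(g_t^{−1}(f_{τs}^{−1}(x)))`: for fixed `x` and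
`τ ∈ [0,1]`, the function `(s,t) ↦ L_{s,t}(x,τ)` vanishes on the lines `s = 0` and
`t = 0`, and its mixed second partial derivative `∂²/∂s∂t` at `(0,0)` equals
`{F,G}(x)`. Here `f_s = ψ_F^s`, `g_t = ψ_G^t`. -/
theorem mixed_partial_L_eq_poisson (n : ℕ) (F G : Phase n → ℝ)
    (hF : SmoothCpt F) (hG : SmoothCpt G)
    (f g : ℝ → Phase n → Phase n)
    (hf : IsHamFlow F f) (hg : IsHamFlow G g)
    (x : Phase n) (τ : ℝ) (hτ : τ ∈ Set.Icc (0 : ℝ) 1) :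
    (∀ t : ℝ, (0 : ℝ) * F x - 0 * F (g (-t) (f (-(τ * 0)) x)) = 0) ∧
    (∀ s : ℝ, s * F x - s * F (g (-(0 : ℝ)) (f (-(τ * s)) x)) = 0) ∧
    deriv (fun s : ℝ =>
        deriv (fun t : ℝ => s * F x - s * F (g (-t) (f (-(τ * s)) x))) 0) 0
      = poisson F G x := by
  have hFd : Differentiable ℝ F := hF.1.differentiable (by simp)
  refine ⟨fun t => by ring, fun s => ?_, ?_⟩
  · rw [neg_zero, hg.1, flow_invariant hFd hf x (-(τ * s))]; ring
  · -- inner derivative computation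
    have hinner : ∀ s : ℝ,
        deriv (fun t : ℝ => s * F x - s * F (g (-t) (f (-(τ * s)) x))) 0
          = s * poisson F G (f (-(τ * s)) x) := by
      intro s
      set y := f (-(τ * s)) x with hy
      have h := ((hasDerivAt_const (0:ℝ) (s * F x)).sub
        ((comp_flow_neg_deriv hFd hg y 0).const_mul s)).deriv
      rw [show (fun t : ℝ => s * F x - s * F (g (-t) y)) = (fun _ => s * F x) - (fun t => s * F (g (-t) y)) from rfl, h]
      rw [neg_zero, hg.1]
      ring
    rw [funext hinner]
    -- outer derivative via slope
    set Φ : ℝ → ℝ := fun s => poisson F G (f (-(τ * s)) x) with hΦ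
    have hΦc : Continuous Φ := by
      have h1 : Continuous fun s : ℝ => f (-(τ * s)) x := by
        have : Differentiable ℝ fun u : ℝ => f u x := fun t => (hf.2.2 x t).differentiableAt
        exact this.continuous.comp (by continuity)
      exact (poisson_continuous hF.1 hG.1).comp h1
    have hΦ0 : Φ 0 = poisson F G x := by simp [hΦ, hf.1]
    have hder : HasDerivAt (fun s : ℝ => s * Φ s) (Φ 0) 0 := by
      rw [hasDerivAt_iff_tendsto_slope]
      have hev : ∀ᶠ s in nhdsWithin (0:ℝ) {(0:ℝ)}ᶜ, Φ s = slope (fun s => s * Φ s) 0 s := by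
        filter_upwards [self_mem_nhdsWithin] with s hs
        have hs0 : s ≠ 0 := hs
        rw [slope_def_field]
        field_simp
        ring
      exact Filter.Tendsto.congr' hev
        ((hΦc.tendsto 0).mono_left nhdsWithin_le_nhds)
    rw [hder.deriv, hΦ0]
end
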